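/- arXiv:1905.07449 — 6 statements merged into one kernel-verified Lean document; each statement's English description precedes it below -/
import Mathlib

section
/- The vector π defined by the matrix-tree formula π_k = (∑_T w(T_k))/(∑_{l=1}^N ∑_T w(T_l)) (sums over all spanning trees T of G) is strictly positive and is the unique probability distribution satisfying ∑_{j=1}^N W_kj π_j = 0 for every state k. -/
open Finset

attribute [local instance] Classical.propDecidable

/-- The transition graph of a rate matrix: an edge between `i ≠ j` whenever
both rates are positive. -/
def transGraph {V : Type*} (W : V → V → ℝ) : SimpleGraph V where
  Adj i j := i ≠ j ∧ 0 < W i j ∧ 0 < W j i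
  symm := ⟨fun i j ⟨h, h1, h2⟩ => ⟨h.symm, h2, h1⟩⟩
  loopless := ⟨fun i ⟨h, _, _⟩ => h rfl⟩

/-- `T` is a spanning tree of `G`. -/
def IsSpanningTree {V : Type*} (G T : SimpleGraph V) : Prop := T ≤ G ∧ T.IsTree

/-- Weight of spanning tree `T` rooted at `r`: product over the edges of `T`,
each directed towards `r`, of the corresponding rate (`W i j` is the rate of
the jump `j → i`). -/
noncomputable def treeWeight {V : Type*} [Fintype V] (W : V → V → ℝ)
    (T : SimpleGraph V) (r : V) : ℝ :=
  ∏ p ∈ Finset.univ.filter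
      (fun p : V × V => T.Adj p.1 p.2 ∧ T.dist p.2 r + 1 = T.dist p.1 r),
    W p.2 p.1

/-- Sum of rooted-tree weights over all spanning trees of `G`, rooted at `k`. -/
noncomputable def sumTrees {V : Type*} [Fintype V] [DecidableEq V] (W : V → V → ℝ)
    (G : SimpleGraph V) (k : V) : ℝ :=
  ∑ T ∈ Finset.univ.filter (fun T : SimpleGraph V => IsSpanningTree G T),
    treeWeight W T k

/-- Steady state via matrix-tree formula. -/
noncomputable def mttPi {V : Type*} [Fintype V] [DecidableEq V] (W : V → V → ℝ)
    (G : SimpleGraph V) (k : V) : ℝ :=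
  sumTrees W G k / ∑ l : V, sumTrees W G l

/-- Weight of a walk: product of the rates of its directed edges
(a step `a → b` has rate `W b a`). -/
noncomputable def walkWeight {V : Type*} (W : V → V → ℝ) {G : SimpleGraph V} {u v : V}
    (p : G.Walk u v) : ℝ :=
  (p.darts.map (fun d => W d.snd d.fst)).prod

/-- Cycle force of a closed walk. -/
noncomputable def cycleForce {V : Type*} (W : V → V → ℝ) {G : SimpleGraph V} {u : V}
    (p : G.Walk u u) : ℝ :=
  Real.log (walkWeight W p / walkWeight W p.reverse)

/-- `Fmax`: the maximum of `|F_C|` over cycles `C` of `G` containing the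
edge `{m,n}`; `0` if there is none. -/
noncomputable def Fmax {V : Type*} (W : V → V → ℝ) (G : SimpleGraph V) (m n : V) : ℝ :=
  sSup {x : ℝ | ∃ (u : V) (p : G.Walk u u), p.IsCycle ∧ s(m, n) ∈ p.edges ∧
    x = |cycleForce W p|}

/-- `F_{i↔j}`: the maximum entropy produced going from `i` to `j` and back
along non-self-intersecting paths. -/
noncomputable def Fbtw {V : Type*} (W : V → V → ℝ) (G : SimpleGraph V) (i j : V) : ℝ :=
  sSup {x : ℝ | ∃ (p : G.Walk i j) (q : G.Walk j i), p.IsPath ∧ q.IsPath ∧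
    x = |Real.log (walkWeight W p * walkWeight W q /
          (walkWeight W p.reverse * walkWeight W q.reverse))|}

/-- The parameterized rates `W_ij = exp(-(B_ij - E_j - F_ij/2))` on the edges of `G`. -/
noncomputable def rates {V : Type*} (G : SimpleGraph V) (Bp : V → V → ℝ) (Ep : V → ℝ)
    (Fp : V → V → ℝ) : V → V → ℝ :=
  fun i j => if G.Adj i j then Real.exp (-(Bp i j - Ep j - Fp i j / 2)) else 0

/-- Steady state as a function of the parameters. -/
noncomputable def piP {V : Type*} [Fintype V] [DecidableEq V] (G : SimpleGraph V)
    (Bp : V → V → ℝ) (Ep : V → ℝ) (Fp : V → V → ℝ) (k : V) : ℝ :=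
  mttPi (rates G Bp Ep Fp) G k

/-- Replace the symmetric edge parameter of the edge `{m,n}` by `t`. -/
noncomputable def updB {V : Type*} (Bp : V → V → ℝ) (m n : V) (t : ℝ) : V → V → ℝ :=
  fun i j => if (i = m ∧ j = n) ∨ (i = n ∧ j = m) then t else Bp i j

/-- Add `t` to the symmetric edge parameters of all edges in `S`. -/
noncomputable def updBadd {V : Type*} (Bp : V → V → ℝ) (S : Set (Sym2 V)) (t : ℝ) : V → V → ℝ :=
  fun i j => if s(i, j) ∈ S then Bp i j + t else Bp i j

/-- Replace the antisymmetric edge parameter of the edge `{i,j}` by `t`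
(and by `-t` in the reverse direction). -/
noncomputable def updF {V : Type*} (Fp : V → V → ℝ) (i j : V) (t : ℝ) : V → V → ℝ :=
  fun a b => if a = i ∧ b = j then t else if a = j ∧ b = i then -t else Fp a b

/-- The full rate matrix, with diagonal entries fixed by conservation of probability. -/
noncomputable def fullW {V : Type*} [Fintype V] [DecidableEq V] (W : V → V → ℝ) :
    V → V → ℝ :=
  fun i j => if i = j then -∑ l ∈ Finset.univ.filter (fun l => l ≠ j), W l j else W i j

namespace MTTAux

open SimpleGraph

variable {V : Type*}

/-- First hitting time of `r` from `v` under iteration of `g`. -/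
noncomputable def hit (g : V → V) (r v : V) : ℕ := sInf {n | g^[n] v = r}

lemma hit_spec {g : V → V} {r v : V} (h : ∃ n, g^[n] v = r) : g^[hit g r v] v = r :=
  Nat.sInf_mem h

lemma hit_min {g : V → V} {r v : V} {l : ℕ} (hl : l < hit g r v) : g^[l] v ≠ r :=
  Nat.notMem_of_lt_sInf hl

lemma hit_self {g : V → V} {r : V} : hit g r r = 0 :=
  Nat.sInf_eq_zero.2 (Or.inl rfl)

lemma hit_pos' {g : V → V} {r v : V} (h : ∃ n, g^[n] v = r) (hv : v ≠ r) : 0 < hit g r v := by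
  rcases Nat.eq_zero_or_pos (hit g r v) with h0 | h0
  · have := hit_spec h
    rw [h0] at this
    exact absurd this hv
  · exact h0

lemma hit_succ {g : V → V} {r v : V} (h : ∃ n, g^[n] v = r) (hv : v ≠ r) :
    hit g r v = hit g r (g v) + 1 := by
  have hpos := hit_pos' h hv
  have hgv : ∃ n, g^[n] (g v) = r := by
    refine ⟨hit g r v - 1, ?_⟩
    have h3 : g^[(hit g r v - 1) + 1] v = r := by
      have : hit g r v - 1 + 1 = hit g r v := Nat.sub_add_cancel hpos
      rw [this]; exact hit_spec h
    rwa [Function.iterate_succ_apply] at h3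
  have h1 : hit g r v ≤ hit g r (g v) + 1 := by
    apply Nat.sInf_le
    show g^[hit g r (g v) + 1] v = r
    rw [Function.iterate_succ_apply]
    exact hit_spec hgv
  have h2 : hit g r (g v) ≤ hit g r v - 1 := by
    apply Nat.sInf_le
    show g^[hit g r v - 1] (g v) = r
    rw [← Function.iterate_succ_apply]
    have := hit_spec h
    convert this using 2
    omega
  omega

lemma iter_agree {f g : V → V} {a : V} (hfg : ∀ x, x ≠ a → f x = g x) {v : V} {n : ℕ}
    (hn : ∀ l, l < n → g^[l] v ≠ a) : f^[n] v = g^[n] v := by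
  induction n with
  | zero => rfl
  | succ n ih =>
    rw [Function.iterate_succ_apply', Function.iterate_succ_apply',
      ih (fun l hl => hn l (Nat.lt_succ_of_lt hl)), hfg _ (hn n (Nat.lt_succ_self n))]

lemma no_return {g : V → V} {j k : V} {n l : ℕ} (hfix : g j = j) (hn : g^[n] k = j)
    (hl : g^[l] k = k) (hlpos : 0 < l) : k = j := by
  have hql : ∀ m, g^[m * l] k = k := by
    intro m
    induction m with
    | zero => simp
    | succ m ih =>
      rw [Nat.succ_mul, Nat.add_comm, Function.iterate_add_apply, ih, hl]
  have hle : n ≤ n * l := Nat.le_mul_of_pos_right n hlpos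
  calc k = g^[n * l] k := (hql n).symm
    _ = g^[n * l - n] (g^[n] k) := by rw [← Function.iterate_add_apply]; congr 1; omega
    _ = j := by rw [hn, Function.iterate_fixed hfix]


variable [Fintype V] [DecidableEq V]

/-- `g` is a parent map on `G` with root `r`. -/
def IsPmap (G : SimpleGraph V) (r : V) (g : V → V) : Prop :=
  g r = r ∧ (∀ v, v ≠ r → G.Adj v (g v)) ∧ ∀ v, ∃ n, g^[n] v = r

/-- The graph associated to a parent map. -/
def pmapGraph (r : V) (g : V → V) : SimpleGraph V :=
  SimpleGraph.fromRel (fun a b => a ≠ r ∧ g a = b)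

lemma pmapGraph_adj {r : V} {g : V → V} {a b : V} :
    (pmapGraph r g).Adj a b ↔ a ≠ b ∧ ((a ≠ r ∧ g a = b) ∨ (b ≠ r ∧ g b = a)) := by
  simp [pmapGraph, SimpleGraph.fromRel_adj]

section Pmap

variable {G : SimpleGraph V} {r : V} {g : V → V} (hg : IsPmap G r g)
include hg

lemma IsPmap.adj_self {v : V} (hv : v ≠ r) : (pmapGraph r g).Adj v (g v) :=
  pmapGraph_adj.2 ⟨(hg.2.1 v hv).ne, Or.inl ⟨hv, rfl⟩⟩

lemma IsPmap.le : pmapGraph r g ≤ G := by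
  intro a b hab
  rcases pmapGraph_adj.1 hab with ⟨hne, ⟨ha, hb⟩ | ⟨ha, hb⟩⟩
  · exact hb ▸ hg.2.1 a ha
  · exact (hb ▸ hg.2.1 b ha).symm

lemma IsPmap.hit_succ' {v : V} (hv : v ≠ r) : hit g r v = hit g r (g v) + 1 :=
  hit_succ (hg.2.2 v) hv

lemma IsPmap.adj_down {a b : V} (hab : (pmapGraph r g).Adj a b)
    (hle : hit g r b ≤ hit g r a) : a ≠ r ∧ g a = b := by
  rcases pmapGraph_adj.1 hab with ⟨hne, h | ⟨hb, hgb⟩⟩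
  · exact h
  · exfalso
    have := hg.hit_succ' hb
    rw [hgb] at this
    omega

lemma IsPmap.reachable (v : V) : (pmapGraph r g).Reachable v r := by
  have H : ∀ n v, hit g r v = n → (pmapGraph r g).Reachable v r := by
    intro n
    induction n using Nat.strong_induction_on with
    | _ n ih =>
      intro v hn
      by_cases hv : v = r
      · subst hv; exact SimpleGraph.Reachable.refl _
      · have hs := hg.hit_succ' hv
        have : (pmapGraph r g).Reachable (g v) r :=
          ih (hit g r (g v)) (by omega) (g v) rfl
        exact (SimpleGraph.Adj.reachable (hg.adj_self hv)).trans this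
  exact H _ v rfl

lemma IsPmap.connected : (pmapGraph r g).Connected := by
  have : Nonempty V := ⟨r⟩
  refine ⟨fun a b => ?_⟩
  exact (hg.reachable a).trans (hg.reachable b).symm

lemma IsPmap.isAcyclic : (pmapGraph r g).IsAcyclic := by
  intro x c hc
  obtain ⟨a, ha, hmax⟩ :=
    Finset.exists_max_image c.support.toFinset (hit g r) ⟨x, by simp⟩
  rw [List.mem_toFinset] at ha
  set c' := c.rotate a ha with hc'def
  have hcyc' : c'.IsCycle := hc.rotate ha
  have hsub : ∀ b ∈ c'.support, hit g r b ≤ hit g r a := by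
    intro b hb
    have hperm := SimpleGraph.Walk.support_rotate c a ha
    rw [SimpleGraph.Walk.support_eq_cons c'] at hb
    rcases List.mem_cons.1 hb with rfl | hb
    · exact le_refl _
    · have : b ∈ c.support.tail := hperm.mem_iff.1 hb
      exact hmax b (List.mem_toFinset.2 (List.mem_of_mem_tail this))
  -- decompose the rotated cycle
  obtain ⟨b₂, hadj, q, hq2⟩ := SimpleGraph.Walk.not_nil_iff.1 hcyc'.not_nil
  rw [hq2] at hcyc' hsub
  clear hq2 hc'def
  have hq : q.IsPath := by
    have := hcyc'.2
    rw [SimpleGraph.Walk.support_cons] at this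
    exact SimpleGraph.Walk.isPath_def q |>.2 this
  have hb₂ : b₂ ∈ (SimpleGraph.Walk.cons hadj q).support := by
    rw [SimpleGraph.Walk.support_cons]
    exact List.mem_cons_of_mem _ q.start_mem_support
  have hb₂d : a ≠ r ∧ g a = b₂ := hg.adj_down hadj (hsub b₂ hb₂)
  -- last vertex before returning to a
  have hne : a ≠ b₂ := hadj.ne
  obtain ⟨b₁, hadj1, q₁, hq₁⟩ := SimpleGraph.Walk.exists_eq_cons_of_ne hne q.reverse
  have hb₁mem : b₁ ∈ (SimpleGraph.Walk.cons hadj q).support := by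
    have : b₁ ∈ q.reverse.support := by
      rw [hq₁, SimpleGraph.Walk.support_cons]
      exact List.mem_cons_of_mem _ q₁.start_mem_support
    rw [SimpleGraph.Walk.support_reverse] at this
    rw [SimpleGraph.Walk.support_cons]
    exact List.mem_cons_of_mem _ (List.mem_reverse.1 this)
  have hb₁d : a ≠ r ∧ g a = b₁ := hg.adj_down hadj1 (hsub b₁ hb₁mem)
  have hbb : b₁ = b₂ := by rw [← hb₁d.2, ← hb₂d.2]
  subst hbb
  -- q.reverse is a path starting with edge a-b₁ and ending at b₁ again
  have hqrev : q.reverse.IsPath := hq.reverse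
  rw [hq₁] at hqrev
  have : q₁.support.Nodup := by
    have h1 := (SimpleGraph.Walk.isPath_def _).1 hqrev
    rw [SimpleGraph.Walk.support_cons] at h1
    exact h1.of_cons
  have hq₁nil : q₁ = SimpleGraph.Walk.nil := by
    rw [← SimpleGraph.Walk.isPath_iff_eq_nil]
    exact (SimpleGraph.Walk.isPath_def _).2 this
  have hlen : q.length = 1 := by
    have : q.reverse.length = 1 := by rw [hq₁, hq₁nil]; simp
    rwa [SimpleGraph.Walk.length_reverse] at this
  have h3 := hcyc'.three_le_length
  rw [SimpleGraph.Walk.length_cons, hlen] at h3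
  omega

lemma IsPmap.isTree : (pmapGraph r g).IsTree := ⟨hg.connected, hg.isAcyclic⟩

lemma IsPmap.dist_eq (v : V) : (pmapGraph r g).dist v r = hit g r v := by
  have hle : ∀ v, (pmapGraph r g).dist v r ≤ hit g r v := by
    intro v
    have H : ∀ n v, hit g r v = n → (pmapGraph r g).dist v r ≤ n := by
      intro n
      induction n using Nat.strong_induction_on with
      | _ n ih =>
        intro v hn
        by_cases hv : v = r
        · subst hv; simp [SimpleGraph.dist_self]
        · have hs := hg.hit_succ' hv
          have h1 : (pmapGraph r g).dist (g v) r ≤ hit g r (g v) :=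
            ih (hit g r (g v)) (by omega) (g v) rfl
          have h2 : (pmapGraph r g).dist v r ≤ (pmapGraph r g).dist (g v) r + 1 := by
            have := SimpleGraph.dist_comm (G := pmapGraph r g) (u := v) (v := r)
            calc (pmapGraph r g).dist v r
                ≤ (pmapGraph r g).dist v (g v) + (pmapGraph r g).dist (g v) r :=
                  SimpleGraph.Connected.dist_triangle hg.connected
              _ ≤ 1 + (pmapGraph r g).dist (g v) r := by
                  have := SimpleGraph.dist_le (SimpleGraph.Walk.cons (hg.adj_self hv)
                    SimpleGraph.Walk.nil)
                  simp at this
                  omega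
              _ = (pmapGraph r g).dist (g v) r + 1 := by omega
          omega
    exact H _ v rfl
  have hge : ∀ n v, (pmapGraph r g).dist v r = n → hit g r v ≤ n := by
    intro n
    induction n using Nat.strong_induction_on with
    | _ n ih =>
      intro v hn
      by_cases hv : v = r
      · subst hv; simp [hit_self]
      · obtain ⟨w, hw⟩ := SimpleGraph.Connected.exists_walk_length_eq_dist hg.connected v r
        have hvne : v ≠ r := hv
        obtain ⟨u, hadj, w', hw'⟩ := SimpleGraph.Walk.exists_eq_cons_of_ne hvne w
        have hdu : (pmapGraph r g).dist u r ≤ n - 1 := by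
          have := SimpleGraph.dist_le w'
          rw [hw', SimpleGraph.Walk.length_cons] at hw
          omega
        have hdpos : 0 < n := by
          rw [← hn]
          exact SimpleGraph.Connected.pos_dist_of_ne hg.connected hv
        have hu : hit g r u ≤ (pmapGraph r g).dist u r :=
          ih ((pmapGraph r g).dist u r) (by omega) u rfl
        -- hit v ≤ hit u + 1 or relation via edge
        rcases pmapGraph_adj.1 hadj with ⟨_, ⟨hvr, hgv⟩ | ⟨hur, hgu⟩⟩
        · have := hg.hit_succ' hvr
          rw [hgv] at this
          omega
        · have := hg.hit_succ' hur
          rw [hgu] at this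
          omega
  exact le_antisymm (hle v) (hge _ v rfl)
  
end Pmap


/-- Canonical parent toward `r` along shortest paths. -/
noncomputable def par (G : SimpleGraph V) (r v : V) : V :=
  if v = r then r else @Classical.epsilon V ⟨v⟩ (fun u => G.Adj v u ∧ G.dist u r + 1 = G.dist v r)

lemma exists_parent {G : SimpleGraph V} (hc : G.Connected) {v r : V} (hv : v ≠ r) :
    ∃ u, G.Adj v u ∧ G.dist u r + 1 = G.dist v r := by
  obtain ⟨w, hw⟩ := hc.exists_walk_length_eq_dist v r
  obtain ⟨u, hadj, w', rfl⟩ := SimpleGraph.Walk.exists_eq_cons_of_ne hv w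
  refine ⟨u, hadj, ?_⟩
  have h1 : G.dist u r ≤ w'.length := SimpleGraph.dist_le w'
  rw [SimpleGraph.Walk.length_cons] at hw
  have h2 : G.dist v r ≤ G.dist u r + 1 := by
    obtain ⟨w2, hw2⟩ := hc.exists_walk_length_eq_dist u r
    have := SimpleGraph.dist_le (SimpleGraph.Walk.cons hadj w2)
    rw [SimpleGraph.Walk.length_cons, hw2] at this
    omega
  omega

lemma par_spec {G : SimpleGraph V} (hc : G.Connected) {v r : V} (hv : v ≠ r) :
    G.Adj v (par G r v) ∧ G.dist (par G r v) r + 1 = G.dist v r := by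
  rw [par, if_neg hv]
  exact Classical.epsilon_spec (exists_parent hc hv)

lemma isPmap_par {G : SimpleGraph V} (hc : G.Connected) (r : V) : IsPmap G r (par G r) := by
  refine ⟨if_pos rfl, fun v hv => (par_spec hc hv).1, ?_⟩
  have H : ∀ n v, G.dist v r = n → ∃ m, (par G r)^[m] v = r := by
    intro n
    induction n using Nat.strong_induction_on with
    | _ n ih =>
      intro v hn
      by_cases hv : v = r
      · exact ⟨0, hv⟩
      · have hs := (par_spec hc hv).2
        obtain ⟨m, hm⟩ := ih (G.dist (par G r v) r) (by omega) (par G r v) rfl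
        exact ⟨m + 1, by rw [Function.iterate_succ_apply, hm]⟩
  exact fun v => H _ v rfl

section Tree

variable {T : SimpleGraph V} (hT : T.IsTree)
include hT

lemma tree_path_length {u r : V} {p : T.Walk u r} (hp : p.IsPath) : p.length = T.dist u r := by
  refine le_antisymm ?_ (SimpleGraph.dist_le p)
  obtain ⟨w, hw⟩ := hT.isConnected.exists_walk_length_eq_dist u r
  have huniq := hT.existsUnique_path u r
  obtain ⟨q, -, hq⟩ := huniq
  have h1 : p = w.bypass := (hq p hp).trans (hq w.bypass w.bypass_isPath).symm
  calc p.length = w.bypass.length := by rw [h1]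
    _ ≤ w.length := w.length_bypass_le
    _ = T.dist u r := hw

lemma tree_support_dist {u r x : V} {p : T.Walk u r} (hp : p.IsPath) (hx : x ∈ p.support) :
    T.dist x r ≤ T.dist u r := by
  have hsplit := p.take_spec hx
  have hlen : (p.takeUntil x hx).length + (p.dropUntil x hx).length = p.length := by
    conv_rhs => rw [← hsplit]
    rw [SimpleGraph.Walk.length_append]
  have hdrop : (p.dropUntil x hx).IsPath := hp.dropUntil hx
  have := tree_path_length hT hdrop
  have := tree_path_length hT hp
  omega

lemma tree_parent_unique {r v u : V} (hadj : T.Adj v u)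
    (hd : T.dist u r + 1 = T.dist v r) : u = par T r v := by
  have hc := hT.isConnected
  have hvr : v ≠ r := by
    intro h
    subst h
    simp [SimpleGraph.dist_self] at hd
  have key : ∀ (u' : V) (hadj' : T.Adj v u'), T.dist u' r + 1 = T.dist v r →
      ∀ p : T.Walk u' r, p.IsPath → (SimpleGraph.Walk.cons hadj' p).IsPath := by
    intro u' hadj' hd' p hp
    refine hp.cons ?_
    intro hvmem
    have := tree_support_dist hT hp hvmem
    omega
  -- build the two paths
  obtain ⟨wu, hwu⟩ := hc.exists_walk_length_eq_dist u r
  have hu2 := par_spec hc (r := r) (v := v) hvr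
  obtain ⟨ww, hww⟩ := hc.exists_walk_length_eq_dist (par T r v) r
  have hp1 : (SimpleGraph.Walk.cons hadj wu.bypass).IsPath :=
    key u hadj hd wu.bypass wu.bypass_isPath
  have hp2 : (SimpleGraph.Walk.cons hu2.1 ww.bypass).IsPath :=
    key _ hu2.1 hu2.2 ww.bypass ww.bypass_isPath
  obtain ⟨q, -, hq⟩ := hT.existsUnique_path v r
  have heq : (SimpleGraph.Walk.cons hadj wu.bypass) = (SimpleGraph.Walk.cons hu2.1 ww.bypass) :=
    (hq _ hp1).trans (hq _ hp2).symm
  have hsup := congrArg SimpleGraph.Walk.support heq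
  rw [SimpleGraph.Walk.support_cons, SimpleGraph.Walk.support_cons,
    SimpleGraph.Walk.support_eq_cons wu.bypass, SimpleGraph.Walk.support_eq_cons ww.bypass]
    at hsup
  simp only [List.cons.injEq] at hsup
  exact hsup.2.1

lemma tree_adj_dist {r a b : V} (hadj : T.Adj a b) :
    T.dist b r + 1 = T.dist a r ∨ T.dist a r + 1 = T.dist b r := by
  have hc := hT.isConnected
  obtain ⟨wa, hwa⟩ := hc.exists_walk_length_eq_dist a r
  set pa := wa.bypass with hpa
  have hpap : pa.IsPath := wa.bypass_isPath
  have hlen : pa.length = T.dist a r := tree_path_length hT hpap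
  by_cases hb : b ∈ pa.support
  · left
    have hdb : T.dist b r ≤ (pa.dropUntil b hb).length := SimpleGraph.dist_le _
    have hdbl : (pa.dropUntil b hb).length = T.dist b r :=
      tree_path_length hT (hpap.dropUntil hb)
    have hsplit := pa.take_spec hb
    have hlen2 : (pa.takeUntil b hb).length + (pa.dropUntil b hb).length = pa.length := by
      conv_rhs => rw [← hsplit]
      rw [SimpleGraph.Walk.length_append]
    have htake : (pa.takeUntil b hb).length ≠ 0 := by
      intro h0
      exact hadj.ne (SimpleGraph.Walk.eq_of_length_eq_zero h0)
    have hle : T.dist a r ≤ T.dist b r + 1 := by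
      obtain ⟨wb, hwb⟩ := hc.exists_walk_length_eq_dist b r
      have := SimpleGraph.dist_le (SimpleGraph.Walk.cons hadj wb)
      rw [SimpleGraph.Walk.length_cons, hwb] at this
      omega
    omega
  · right
    have hp2 : (SimpleGraph.Walk.cons hadj.symm pa).IsPath := hpap.cons hb
    have := tree_path_length hT hp2
    rw [SimpleGraph.Walk.length_cons, hlen] at this
    omega

lemma tree_isPmap (r : V) : IsPmap T r (par T r) := isPmap_par hT.isConnected r

lemma pmapGraph_par_eq (r : V) : pmapGraph r (par T r) = T := by
  ext a b
  constructor
  · exact fun h => (tree_isPmap hT r).le h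
  · intro hadj
    rcases tree_adj_dist hT (r := r) hadj with h | h
    · have ha : a ≠ r := by
        intro h0
        subst h0
        simp [SimpleGraph.dist_self] at h
      exact pmapGraph_adj.2 ⟨hadj.ne, Or.inl ⟨ha, (tree_parent_unique hT hadj h).symm⟩⟩
    · have hb : b ≠ r := by
        intro h0
        subst h0
        simp [SimpleGraph.dist_self] at h
      exact pmapGraph_adj.2 ⟨hadj.ne, Or.inr ⟨hb, (tree_parent_unique hT hadj.symm h).symm⟩⟩

end Tree

lemma par_pmapGraph_eq {G : SimpleGraph V} {r : V} {g : V → V} (hg : IsPmap G r g) :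
    par (pmapGraph r g) r = g := by
  funext v
  by_cases hv : v = r
  · subst hv
    rw [par, if_pos rfl, hg.1]
  · refine (tree_parent_unique hg.isTree (hg.adj_self hv) ?_).symm
    rw [hg.dist_eq, hg.dist_eq, ← hg.hit_succ' hv]


section Weights

variable {W : V → V → ℝ}

lemma IsPmap.mono {G G' : SimpleGraph V} {r : V} {g : V → V} (hg : IsPmap G r g)
    (hle : G ≤ G') : IsPmap G' r g :=
  ⟨hg.1, fun v hv => hle (hg.2.1 v hv), hg.2.2⟩

lemma treeWeight_eq {T : SimpleGraph V} (hT : T.IsTree) (r : V) :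
    treeWeight W T r = ∏ v ∈ univ.filter (fun v => v ≠ r), W (par T r v) v := by
  rw [treeWeight]
  have hset : univ.filter (fun p : V × V => T.Adj p.1 p.2 ∧ T.dist p.2 r + 1 = T.dist p.1 r)
      = (univ.filter (fun v => v ≠ r)).image (fun v => (v, par T r v)) := by
    ext ⟨a, b⟩
    simp only [mem_filter, mem_univ, true_and, mem_image]
    constructor
    · rintro ⟨hadj, hd⟩
      have ha : a ≠ r := by
        intro h0
        subst h0
        simp [SimpleGraph.dist_self] at hd
      refine ⟨a, ha, ?_⟩
      rw [← tree_parent_unique hT hadj hd]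
    · rintro ⟨v, hv, heq⟩
      obtain ⟨rfl, rfl⟩ : v = a ∧ par T r v = b := by
        constructor
        · exact congrArg Prod.fst heq
        · exact congrArg Prod.snd heq
      have := par_spec hT.isConnected (r := r) hv
      exact ⟨this.1, this.2⟩
  rw [hset, Finset.prod_image (fun x _ y _ hxy => congrArg Prod.fst hxy)]

/-- The finset of parent maps. -/
noncomputable def pmapF (G : SimpleGraph V) (r : V) : Finset (V → V) :=
  univ.filter (IsPmap G r)

lemma sumTrees_eq (G : SimpleGraph V) (r : V) :
    sumTrees W G r = ∑ g ∈ pmapF G r, ∏ v ∈ univ.filter (fun v => v ≠ r), W (g v) v := by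
  rw [sumTrees]
  refine Finset.sum_nbij' (fun T => par T r) (fun g => pmapGraph r g) ?_ ?_ ?_ ?_ ?_
  · intro T hTmem
    obtain ⟨hle, hT⟩ : IsSpanningTree G T := (mem_filter.1 hTmem).2
    exact mem_filter.2 ⟨mem_univ _, (tree_isPmap hT r).mono hle⟩
  · intro g hgmem
    have hg : IsPmap G r g := (mem_filter.1 hgmem).2
    exact mem_filter.2 ⟨mem_univ _, hg.le, hg.isTree⟩
  · intro T hTmem
    exact pmapGraph_par_eq (mem_filter.1 hTmem).2.2 r
  · intro g hgmem
    exact par_pmapGraph_eq (mem_filter.1 hgmem).2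
  · intro T hTmem
    exact treeWeight_eq (mem_filter.1 hTmem).2.2 r

end Weights

section Identities

variable {W : V → V → ℝ}

/-- The functional digraphs with all arcs in `G`, unicyclic with cycle through `k`. -/
def IsCyc (G : SimpleGraph V) (k : V) (f : V → V) : Prop :=
  (∀ v, G.Adj v (f v)) ∧ ∀ v, ∃ n, 0 < n ∧ f^[n] v = k

noncomputable def sfin (G : SimpleGraph V) (k : V) : Finset (V → V) :=
  univ.filter (IsCyc G k)

/-- Length of the cycle through `k`. -/
noncomputable def cm (f : V → V) (k : V) : ℕ := sInf {n | 0 < n ∧ f^[n] k = k}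

/-- The predecessor of `k` on its cycle. -/
noncomputable def cpred (f : V → V) (k : V) : V := f^[cm f k - 1] k

lemma cm_spec {f : V → V} {k : V} (h : ∃ n, 0 < n ∧ f^[n] k = k) :
    0 < cm f k ∧ f^[cm f k] k = k := Nat.sInf_mem h

lemma cm_min {f : V → V} {k : V} {l : ℕ} (h0 : 0 < l) (hl : l < cm f k) : f^[l] k ≠ k :=
  fun hc => Nat.notMem_of_lt_sInf hl ⟨h0, hc⟩

lemma isCyc_updateA {G : SimpleGraph V} {j k : V} {g : V → V} (hg : IsPmap G j g)
    (hadj : G.Adj k j) : IsCyc G k (Function.update g j k) := by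
  set f := Function.update g j k with hf
  have hfg : ∀ x, x ≠ j → f x = g x := fun x hx => Function.update_of_ne hx _ _
  constructor
  · intro v
    by_cases hv : v = j
    · subst hv
      rw [show f v = k from Function.update_self _ _ _]
      exact hadj.symm
    · rw [hfg v hv]
      exact hg.2.1 v hv
  · intro v
    refine ⟨hit g j v + 1, Nat.succ_pos _, ?_⟩
    have h1 : f^[hit g j v] v = j := by
      rw [iter_agree hfg (fun l hl => hit_min hl)]
      exact hit_spec (hg.2.2 v)
    rw [Function.iterate_succ_apply', h1]
    exact Function.update_self _ _ _

lemma cm_updateA {G : SimpleGraph V} {j k : V} {g : V → V} (hg : IsPmap G j g)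
    (hjk : j ≠ k) : cm (Function.update g j k) k = hit g j k + 1 := by
  set f := Function.update g j k with hf
  have hfg : ∀ x, x ≠ j → f x = g x := fun x hx => Function.update_of_ne hx _ _
  set n₀ := hit g j k with hn₀
  have hfj : f^[n₀] k = j := by
    rw [iter_agree hfg (fun l hl => hit_min hl)]
    exact hit_spec (hg.2.2 k)
  have hfk : f^[n₀ + 1] k = k := by
    rw [Function.iterate_succ_apply', hfj]
    exact Function.update_self _ _ _
  have hub : cm f k ≤ n₀ + 1 := Nat.sInf_le ⟨Nat.succ_pos _, hfk⟩
  have hlb : ∀ l, 0 < l → l ≤ n₀ → f^[l] k ≠ k := by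
    intro l hl0 hln hc
    have hgl : f^[l] k = g^[l] k :=
      iter_agree hfg (fun i hi => hit_min (lt_of_lt_of_le hi hln))
    rw [hgl] at hc
    exact hjk (no_return hg.1 (hit_spec (hg.2.2 k)) hc hl0).symm
  have hc := cm_spec (f := f) (k := k) ⟨n₀ + 1, Nat.succ_pos _, hfk⟩
  rcases Nat.lt_or_ge (cm f k) (n₀ + 1) with h | h
  · exact absurd hc.2 (hlb _ hc.1 (by omega))
  · omega

lemma cpred_updateA {G : SimpleGraph V} {j k : V} {g : V → V} (hg : IsPmap G j g)
    (hjk : j ≠ k) : cpred (Function.update g j k) k = j := by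
  set f := Function.update g j k with hf
  have hfg : ∀ x, x ≠ j → f x = g x := fun x hx => Function.update_of_ne hx _ _
  rw [cpred, cm_updateA hg hjk]
  simp only [Nat.add_sub_cancel]
  rw [iter_agree hfg (fun l hl => hit_min hl)]
  exact hit_spec (hg.2.2 k)

lemma isCyc_analysis {G : SimpleGraph V} {k : V} {f : V → V} (hf : IsCyc G k f) :
    f (cpred f k) = k ∧ cpred f k ≠ k ∧ G.Adj k (cpred f k) ∧
      IsPmap G (cpred f k) (Function.update f (cpred f k) (cpred f k)) := by
  have hms := cm_spec (hf.2 k)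
  have hfj : f (cpred f k) = k := by
    have h2 : f^[(cm f k - 1) + 1] k = k := by
      have h1 : cm f k - 1 + 1 = cm f k := Nat.succ_pred_eq_of_pos hms.1
      rw [h1]
      exact hms.2
    rwa [Function.iterate_succ_apply'] at h2
  have hm2 : 2 ≤ cm f k := by
    rcases Nat.lt_or_ge (cm f k) 2 with h | h
    · exfalso
      have h1 : cm f k = 1 := by omega
      have h2 : cpred f k = k := by rw [cpred, h1]; rfl
      rw [h2] at hfj
      exact (hf.1 k).ne' hfj
    · exact h
  have hjk : cpred f k ≠ k := by
    rw [cpred]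
    exact cm_min (by omega) (by omega)
  have hadj : G.Adj k (cpred f k) := by
    have h3 := hf.1 (cpred f k)
    rw [hfj] at h3
    exact h3.symm
  refine ⟨hfj, hjk, hadj, ?_⟩
  set j := cpred f k with hj
  set g := Function.update f j j with hg
  have hgf : ∀ x, x ≠ j → g x = f x := fun x hx => Function.update_of_ne hx _ _
  refine ⟨Function.update_self _ _ _, fun v hv => by rw [hgf v hv]; exact hf.1 v, ?_⟩
  intro v
  have hreach : ∃ n, f^[n] v = j := by
    obtain ⟨n₁, -, hn₁⟩ := hf.2 v
    refine ⟨(cm f k - 1) + n₁, ?_⟩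
    rw [Function.iterate_add_apply, hn₁, hj, cpred]
  refine ⟨hit f j v, ?_⟩
  rw [iter_agree hgf (fun l hl => hit_min hl)]
  exact hit_spec hreach

lemma isCyc_pmapB {G : SimpleGraph V} {k : V} {f : V → V} (hf : IsCyc G k f) :
    IsPmap G k (Function.update f k k) := by
  set g := Function.update f k k with hg
  have hgf : ∀ x, x ≠ k → g x = f x := fun x hx => Function.update_of_ne hx _ _
  refine ⟨Function.update_self _ _ _, fun v hv => by rw [hgf v hv]; exact hf.1 v, ?_⟩
  intro v
  have hreach : ∃ n, f^[n] v = k := by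
    obtain ⟨n₁, -, hn₁⟩ := hf.2 v
    exact ⟨n₁, hn₁⟩
  refine ⟨hit f k v, ?_⟩
  rw [iter_agree hgf (fun l hl => hit_min hl)]
  exact hit_spec hreach

lemma isCyc_updateB {G : SimpleGraph V} {i k : V} {g : V → V} (hg : IsPmap G k g)
    (hadj : G.Adj k i) : IsCyc G k (Function.update g k i) := by
  set f := Function.update g k i with hf
  have hfg : ∀ x, x ≠ k → f x = g x := fun x hx => Function.update_of_ne hx _ _
  have hupdk : f k = i := Function.update_self _ _ _
  constructor
  · intro v
    by_cases hv : v = k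
    · rw [hv, hupdk]
      exact hadj
    · rw [hfg v hv]
      exact hg.2.1 v hv
  · intro v
    by_cases hv : v = k
    · refine ⟨hit g k i + 1, Nat.succ_pos _, ?_⟩
      rw [hv, Function.iterate_succ_apply, hupdk,
        iter_agree hfg (fun l hl => hit_min hl)]
      exact hit_spec (hg.2.2 i)
    · refine ⟨hit g k v, hit_pos' (hg.2.2 v) hv, ?_⟩
      rw [iter_agree hfg (fun l hl => hit_min hl)]
      exact hit_spec (hg.2.2 v)

lemma prod_univ_split (Wf : V → V → ℝ) (f : V → V) (j : V) :
    ∏ v, Wf (f v) v = Wf (f j) j * ∏ v ∈ univ.filter (fun v => v ≠ j), Wf (f v) v := by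
  rw [Finset.filter_ne', ← Finset.mul_prod_erase univ _ (mem_univ j)]

lemma identityA (G : SimpleGraph V) (k : V) :
    ∑ j ∈ univ.filter (fun j => G.Adj k j), ∑ g ∈ pmapF G j,
      W k j * ∏ v ∈ univ.filter (fun v => v ≠ j), W (g v) v
    = ∑ f ∈ sfin G k, ∏ v, W (f v) v := by
  have hs := Finset.sum_sigma (univ.filter (fun j => G.Adj k j)) (fun j => pmapF G j)
    (fun p : Σ _ : V, V → V => W k p.1 * ∏ v ∈ univ.filter (fun v => v ≠ p.1), W (p.2 v) v)
  rw [← hs]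
  refine Finset.sum_nbij' (fun p => Function.update p.2 p.1 k)
    (fun f => ⟨cpred f k, Function.update f (cpred f k) (cpred f k)⟩) ?_ ?_ ?_ ?_ ?_
  · rintro ⟨j, g⟩ hp
    rw [Finset.mem_sigma, mem_filter] at hp
    have hg : IsPmap G j g := (mem_filter.1 hp.2).2
    exact mem_filter.2 ⟨mem_univ _, isCyc_updateA hg hp.1.2⟩
  · intro f hfm
    have hf : IsCyc G k f := (mem_filter.1 hfm).2
    obtain ⟨hfj, hjk, hadj, hpm⟩ := isCyc_analysis hf
    rw [Finset.mem_sigma, mem_filter]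
    exact ⟨⟨mem_univ _, hadj⟩, mem_filter.2 ⟨mem_univ _, hpm⟩⟩
  · rintro ⟨j, g⟩ hp
    rw [Finset.mem_sigma, mem_filter] at hp
    have hg : IsPmap G j g := (mem_filter.1 hp.2).2
    have hjk : j ≠ k := by
      intro h
      exact (h ▸ hp.1.2).ne rfl
    have h1 : cpred (Function.update g j k) k = j := cpred_updateA hg hjk
    have h2 : Function.update (Function.update g j k) j j = g := by
      funext x
      by_cases hx : x = j
      · subst hx
        rw [Function.update_self, hg.1]
      · rw [Function.update_of_ne hx, Function.update_of_ne hx]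
    simp only [h1, h2]
  · intro f hfm
    have hf : IsCyc G k f := (mem_filter.1 hfm).2
    obtain ⟨hfj, hjk, hadj, hpm⟩ := isCyc_analysis hf
    funext x
    show Function.update (Function.update f (cpred f k) (cpred f k)) (cpred f k) k x = f x
    by_cases hx : x = cpred f k
    · rw [hx, Function.update_self, hfj]
    · rw [Function.update_of_ne hx, Function.update_of_ne hx]
  · rintro ⟨j, g⟩ hp
    rw [prod_univ_split W (Function.update g j k) j, Function.update_self]
    congr 1
    refine Finset.prod_congr rfl ?_
    intro v hv
    rw [Function.update_of_ne (mem_filter.1 hv).2]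

lemma identityB (G : SimpleGraph V) (k : V) :
    ∑ i ∈ univ.filter (fun i => G.Adj k i), ∑ g ∈ pmapF G k,
      W i k * ∏ v ∈ univ.filter (fun v => v ≠ k), W (g v) v
    = ∑ f ∈ sfin G k, ∏ v, W (f v) v := by
  have hs := Finset.sum_product' (s := univ.filter (fun i => G.Adj k i)) (t := pmapF G k)
    (f := fun i g => W i k * ∏ v ∈ univ.filter (fun v => v ≠ k), W (g v) v)
  rw [← hs]
  refine Finset.sum_nbij' (fun p => Function.update p.2 k p.1)
    (fun f => (f k, Function.update f k k)) ?_ ?_ ?_ ?_ ?_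
  · rintro ⟨i, g⟩ hp
    rw [Finset.mem_product, mem_filter] at hp
    have hg : IsPmap G k g := (mem_filter.1 hp.2).2
    exact mem_filter.2 ⟨mem_univ _, isCyc_updateB hg hp.1.2⟩
  · intro f hfm
    have hf : IsCyc G k f := (mem_filter.1 hfm).2
    rw [Finset.mem_product, mem_filter]
    exact ⟨⟨mem_univ _, hf.1 k⟩, mem_filter.2 ⟨mem_univ _, isCyc_pmapB hf⟩⟩
  · rintro ⟨i, g⟩ hp
    rw [Finset.mem_product, mem_filter] at hp
    have hg : IsPmap G k g := (mem_filter.1 hp.2).2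
    have h1 : Function.update g k i k = i := Function.update_self _ _ _
    have h2 : Function.update (Function.update g k i) k k = g := by
      funext x
      by_cases hx : x = k
      · subst hx
        rw [Function.update_self, hg.1]
      · rw [Function.update_of_ne hx, Function.update_of_ne hx]
    have h3 : (Function.update g k i k, Function.update (Function.update g k i) k k)
        = (i, g) := by rw [h1, h2]
    exact h3
  · intro f hfm
    funext x
    show Function.update (Function.update f k k) k (f k) x = f x
    by_cases hx : x = k
    · rw [hx, Function.update_self]
    · rw [Function.update_of_ne hx, Function.update_of_ne hx]
  · rintro ⟨i, g⟩ hp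
    rw [prod_univ_split W (Function.update g k i) k, Function.update_self]
    congr 1
    refine Finset.prod_congr rfl ?_
    intro v hv
    rw [Function.update_of_ne (mem_filter.1 hv).2]

end Identities

section Main

variable {W : V → V → ℝ}

lemma W_pos_of_adj {i j : V} (h : (transGraph W).Adj i j) : 0 < W j i := h.2.2

lemma W_eq_zero (hoff : ∀ i j, i ≠ j → 0 ≤ W i j)
    (hsym : ∀ i j, i ≠ j → (0 < W i j ↔ 0 < W j i)) {i j : V} (hij : i ≠ j)
    (hna : ¬ (transGraph W).Adj i j) : W i j = 0 := by
  rcases (hoff i j hij).lt_or_eq with h | h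
  · exact absurd ⟨hij, h, (hsym i j hij).1 h⟩ hna
  · exact h.symm

lemma sumTrees_pos (hconn : (transGraph W).Connected) (r : V) :
    0 < sumTrees W (transGraph W) r := by
  rw [sumTrees_eq]
  refine Finset.sum_pos ?_ ⟨par (transGraph W) r,
    mem_filter.2 ⟨mem_univ _, isPmap_par hconn r⟩⟩
  intro g hg
  refine Finset.prod_pos ?_
  intro v hv
  exact W_pos_of_adj ((mem_filter.1 hg).2.2.1 v (mem_filter.1 hv).2)

lemma kernel (hoff : ∀ i j, i ≠ j → 0 ≤ W i j)
    (hsym : ∀ i j, i ≠ j → (0 < W i j ↔ 0 < W j i))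
    (hdiag : ∀ j, W j j = -∑ i ∈ Finset.univ.filter (fun i => i ≠ j), W i j)
    (k : V) :
    ∑ j, W k j * sumTrees W (transGraph W) j = 0 := by
  set G := transGraph W with hG
  have h1 : ∑ j, W k j * sumTrees W G j
      = W k k * sumTrees W G k + ∑ j ∈ univ.erase k, W k j * sumTrees W G j :=
    (Finset.add_sum_erase univ (fun j => W k j * sumTrees W G j) (mem_univ k)).symm
  have h2 : ∑ j ∈ univ.erase k, W k j * sumTrees W G j
      = ∑ j ∈ univ.filter (fun j => G.Adj k j), W k j * sumTrees W G j := by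
    refine (Finset.sum_subset ?_ ?_).symm
    · intro j hj
      exact mem_erase.2 ⟨(mem_filter.1 hj).2.ne', mem_univ _⟩
    · intro j hj hnj
      have hjk : j ≠ k := (mem_erase.1 hj).1
      have hna : ¬ G.Adj k j := fun h => hnj (mem_filter.2 ⟨mem_univ _, h⟩)
      rw [W_eq_zero hoff hsym (Ne.symm hjk) hna, zero_mul]
  have h3 : ∑ j ∈ univ.filter (fun j => G.Adj k j), W k j * sumTrees W G j
      = ∑ f ∈ sfin G k, ∏ v, W (f v) v := by
    rw [← identityA]
    refine Finset.sum_congr rfl fun j _ => ?_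
    rw [sumTrees_eq, Finset.mul_sum]
  have h4 : ∑ f ∈ sfin G k, ∏ v, W (f v) v
      = (∑ i ∈ univ.filter (fun i => G.Adj k i), W i k) * sumTrees W G k := by
    rw [← identityB, Finset.sum_mul]
    refine Finset.sum_congr rfl fun i _ => ?_
    rw [sumTrees_eq, Finset.mul_sum]
  have h5 : ∑ i ∈ univ.filter (fun i => G.Adj k i), W i k
      = ∑ i ∈ univ.filter (fun i => i ≠ k), W i k := by
    refine Finset.sum_subset ?_ ?_
    · intro i hi
      exact mem_filter.2 ⟨mem_univ _, (mem_filter.1 hi).2.ne'⟩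
    · intro i hi hni
      have hik : i ≠ k := (mem_filter.1 hi).2
      have hna : ¬ G.Adj k i := fun h => hni (mem_filter.2 ⟨mem_univ _, h⟩)
      exact W_eq_zero hoff hsym hik (fun h => hna h.symm)
  rw [h1, h2, h3, h4, h5]
  have h6 := hdiag k
  rw [h6]
  ring

lemma uniqueness (hoff : ∀ i j, i ≠ j → 0 ≤ W i j)
    (hconn : (transGraph W).Connected) {p q : V → ℝ}
    (hq : ∀ k, 0 < q k) (hqs : ∑ k, q k = 1) (hqk : ∀ k, ∑ j, W k j * q j = 0)
    (hp0 : ∀ k, 0 ≤ p k) (hps : ∑ k, p k = 1) (hpk : ∀ k, ∑ j, W k j * p j = 0) :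
    p = q := by
  have : Nonempty V := hconn.nonempty
  set c := fun j => p j / q j with hc
  have hpc : ∀ j, p j = q j * c j := by
    intro j
    show p j = q j * (p j / q j)
    rw [mul_comm, div_mul_cancel₀ (p j) (hq j).ne']
  obtain ⟨k₀, -, hmax⟩ := Finset.exists_max_image univ c univ_nonempty
  have step : ∀ k, c k = c k₀ → ∀ j, (transGraph W).Adj k j → c j = c k₀ := by
    intro k hck j hadj
    have hsum0 : ∑ j, W k j * q j * (c j - c k₀) = 0 := by
      have he : ∀ j, W k j * q j * (c j - c k₀) = W k j * p j - c k₀ * (W k j * q j) := by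
        intro j
        rw [hpc j]
        ring
      calc ∑ j, W k j * q j * (c j - c k₀)
          = ∑ j, (W k j * p j - c k₀ * (W k j * q j)) := Finset.sum_congr rfl fun j _ => he j
        _ = (∑ j, W k j * p j) - c k₀ * ∑ j, W k j * q j := by
            rw [Finset.sum_sub_distrib, Finset.mul_sum]
        _ = 0 := by rw [hpk k, hqk k]; ring
    have hsplit : W k k * q k * (c k - c k₀) + ∑ j ∈ univ.erase k, W k j * q j * (c j - c k₀)
        = ∑ j, W k j * q j * (c j - c k₀) :=
      Finset.add_sum_erase univ (fun j => W k j * q j * (c j - c k₀)) (mem_univ k)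
    have hdterm : W k k * q k * (c k - c k₀) = 0 := by rw [hck]; ring
    have hsum1 : ∑ j ∈ univ.erase k, W k j * q j * (c j - c k₀) = 0 := by
      rw [hsum0, hdterm] at hsplit
      linarith
    have hnonpos : ∀ j ∈ univ.erase k, W k j * q j * (c j - c k₀) ≤ 0 := by
      intro j hj
      have hjk : j ≠ k := (mem_erase.1 hj).1
      have h1 : 0 ≤ W k j * q j := mul_nonneg (hoff k j (Ne.symm hjk)) (hq j).le
      have h2 : c j - c k₀ ≤ 0 := sub_nonpos.2 (hmax j (mem_univ j))
      exact mul_nonpos_of_nonneg_of_nonpos h1 h2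
    have hterm := (Finset.sum_eq_zero_iff_of_nonpos hnonpos).1 hsum1
    by_cases hjk : j = k
    · rw [hjk]; exact hck
    · have hj0 := hterm j (mem_erase.2 ⟨hjk, mem_univ j⟩)
      have hW : 0 < W k j := hadj.2.1
      have hne : W k j * q j ≠ 0 := (mul_pos hW (hq j)).ne'
      rcases mul_eq_zero.1 hj0 with h | h
      · exact absurd h hne
      · linarith [sub_eq_zero.1 h]
  have key : ∀ (u v : V) (w : (transGraph W).Walk u v), c u = c k₀ → c v = c k₀ := by
    intro u v w
    induction w with
    | nil => exact id
    | cons h q ih => exact fun hu => ih (step _ hu _ h)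
  have hall : ∀ j, c j = c k₀ := fun j => key k₀ j (hconn k₀ j).some rfl
  have hc1 : c k₀ = 1 := by
    have hsum : ∑ k, p k = c k₀ * ∑ k, q k := by
      rw [Finset.mul_sum]
      refine Finset.sum_congr rfl fun j _ => ?_
      rw [hpc j, hall j]
      ring
    rw [hps, hqs, mul_one] at hsum
    exact hsum.symm
  funext j
  rw [hpc j, hall j, hc1, mul_one]

end Main

end MTTAux

/-- The matrix-tree vector `π` is strictly positive and is the
unique probability distribution annihilated by the rate matrix `W`. -/
theorem stmt0 {V : Type*} [Fintype V] [DecidableEq V] (W : V → V → ℝ)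
    (hoff : ∀ i j, i ≠ j → 0 ≤ W i j)
    (hsym : ∀ i j, i ≠ j → (0 < W i j ↔ 0 < W j i))
    (hdiag : ∀ j, W j j = -∑ i ∈ Finset.univ.filter (fun i => i ≠ j), W i j)
    (hconn : (transGraph W).Connected) :
    (∀ k, 0 < mttPi W (transGraph W) k) ∧
    (∑ k, mttPi W (transGraph W) k = 1) ∧
    (∀ k, ∑ j, W k j * mttPi W (transGraph W) j = 0) ∧
    (∀ p : V → ℝ, (∀ k, 0 ≤ p k) → (∑ k, p k = 1) →
      (∀ k, ∑ j, W k j * p j = 0) → p = mttPi W (transGraph W)) := by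
  have hZ : 0 < ∑ l : V, sumTrees W (transGraph W) l := by
    have : Nonempty V := hconn.nonempty
    exact Finset.sum_pos (fun l _ => MTTAux.sumTrees_pos hconn l) Finset.univ_nonempty
  have hpos : ∀ k, 0 < mttPi W (transGraph W) k := by
    intro k
    exact div_pos (MTTAux.sumTrees_pos hconn k) hZ
  have hsum1 : ∑ k, mttPi W (transGraph W) k = 1 := by
    unfold mttPi
    rw [← Finset.sum_div]
    exact div_self hZ.ne'
  have hker : ∀ k, ∑ j, W k j * mttPi W (transGraph W) j = 0 := by
    intro k
    have hnum := MTTAux.kernel hoff hsym hdiag k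
    unfold mttPi
    calc ∑ j, W k j * (sumTrees W (transGraph W) j / ∑ l : V, sumTrees W (transGraph W) l)
        = (∑ j, W k j * sumTrees W (transGraph W) j) / ∑ l : V, sumTrees W (transGraph W) l := by
          rw [Finset.sum_div]
          exact Finset.sum_congr rfl fun j _ => by ring
      _ = 0 := by rw [hnum, zero_div]
  refine ⟨hpos, hsum1, hker, ?_⟩
  intro p hp0 hps hpk
  exact MTTAux.uniqueness hoff hconn hpos hsum1 hker hp0 hps hpk
end

section
/- For every pair of states i, k, the partial derivative of the steady-state probability π_i with respect to the vertex parameter E_k equals -π_k(1-π_k) if i = k, and equals π_i π_k if i ≠ k. -/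
open Finset

attribute [local instance] Classical.propDecidable

section Auxiliary

-- Existence of a spanning tree of a finite connected graph.
lemma my_exists_spanning_tree {V : Type*} [Fintype V] :
    ∀ (n : ℕ) (G : SimpleGraph V), G.edgeSet.ncard = n → G.Connected →
      ∃ T, T ≤ G ∧ T.IsTree := by
  intro n
  induction n using Nat.strong_induction_on with
  | _ n ih =>
    intro G hn hG
    by_cases hac : G.IsAcyclic
    · exact ⟨G, le_refl _, hG, hac⟩
    · have : ¬ ∀ ⦃v w : V⦄, G.Adj v w → G.IsBridge s(v, w) := by
        intro h
        exact hac (SimpleGraph.isAcyclic_iff_forall_adj_isBridge.2 h)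
      push_neg at this
      obtain ⟨v, w, hadj, hbr⟩ := this
      set G' := G \ SimpleGraph.fromEdgeSet {s(v, w)} with hG'def
      have hvw' : G'.Reachable v w := by
        rw [SimpleGraph.isBridge_iff] at hbr
        push_neg at hbr
        exact hbr
      have hstep : ∀ a b : V, G.Adj a b → G'.Reachable a b := by
        intro a b hab
        by_cases he : s(a, b) = s(v, w)
        · rw [Sym2.eq_iff] at he
          rcases he with ⟨rfl, rfl⟩ | ⟨rfl, rfl⟩
          · exact hvw'
          · exact hvw'.symm
        · apply SimpleGraph.Adj.reachable
          rw [SimpleGraph.sdiff_adj]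
          refine ⟨hab, ?_⟩
          rw [SimpleGraph.fromEdgeSet_adj]
          simp only [Set.mem_singleton_iff]
          rintro ⟨h1, -⟩
          exact he h1
      have hG'pre : G'.Preconnected := by
        intro a b
        obtain ⟨p⟩ := hG.preconnected a b
        induction p with
        | nil => exact SimpleGraph.Reachable.refl _
        | cons h q ihq => exact (hstep _ _ h).trans ihq
      have hG'conn : G'.Connected := by
        haveI := hG.nonempty
        exact ⟨hG'pre⟩
      have hedge : G'.edgeSet = G.edgeSet \ {s(v, w)} := by
        rw [hG'def, SimpleGraph.edgeSet_sdiff, SimpleGraph.edgeSet_fromEdgeSet,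
          SimpleGraph.edgeSet_sdiff_sdiff_isDiag]
      have hcard : G'.edgeSet.ncard < n := by
        rw [hedge, ← hn]
        exact Set.ncard_diff_singleton_lt_of_mem hadj (Set.toFinite _)
      obtain ⟨T, hT1, hT2⟩ := ih _ hcard G' rfl hG'conn
      exact ⟨T, hT1.trans sdiff_le, hT2⟩

-- In a tree, each vertex `k ≠ l` has a unique neighbour strictly closer to `l`.
lemma my_parent_unique {V : Type*} {T : SimpleGraph V} (hT : T.IsTree) {k l : V}
    (hkl : k ≠ l) :
    ∃! j, T.Adj k j ∧ T.dist j l + 1 = T.dist k l := by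
  have hc := hT.isConnected
  have hd : 0 < T.dist k l := hc.pos_dist_of_ne hkl
  have huniq : ∀ j1 j2, (T.Adj k j1 ∧ T.dist j1 l + 1 = T.dist k l) →
      (T.Adj k j2 ∧ T.dist j2 l + 1 = T.dist k l) → j1 = j2 := by
    rintro j1 j2 ⟨h1, hd1⟩ ⟨h2, hd2⟩
    obtain ⟨q1, hq1⟩ := hc.exists_walk_length_eq_dist j1 l
    obtain ⟨q2, hq2⟩ := hc.exists_walk_length_eq_dist j2 l
    have hc1 : (SimpleGraph.Walk.cons h1 q1).IsPath := by
      apply SimpleGraph.Walk.isPath_of_length_eq_dist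
      simp [hq1, hd1]
    have hc2 : (SimpleGraph.Walk.cons h2 q2).IsPath := by
      apply SimpleGraph.Walk.isPath_of_length_eq_dist
      simp [hq2, hd2]
    have := (hT.existsUnique_path k l).unique hc1 hc2
    have hgv := congrArg (fun p => SimpleGraph.Walk.getVert p 1) this
    simpa [SimpleGraph.Walk.getVert_cons_succ, SimpleGraph.Walk.getVert_zero] using hgv
  obtain ⟨p, hp⟩ := hc.exists_walk_length_eq_dist k l
  cases p with
  | nil => simp only [SimpleGraph.Walk.length_nil] at hp; omega
  | @cons _ j _ h q =>
    refine ⟨j, ⟨h, ?_⟩, fun j' hj' => huniq j' j hj' ⟨h, ?_⟩⟩ <;>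
    · have hle : T.dist j l ≤ q.length := SimpleGraph.dist_le q
      have hkj : T.dist k j ≤ 1 := by
        simpa using SimpleGraph.dist_le (SimpleGraph.Walk.cons h SimpleGraph.Walk.nil)
      have htri : T.dist k l ≤ T.dist k j + T.dist j l := hc.dist_triangle
      simp only [SimpleGraph.Walk.length_cons] at hp
      omega

-- The derivative computation in abstract form.
lemma main_calc {V : Type*} [Fintype V] [DecidableEq V] [Nonempty V] (S : V → ℝ) (k i : V) (c : ℝ)
    (hS : ∀ l, 0 < S l) :
    HasDerivAt (fun t => (if i = k then S k else S i * Real.exp (t - c)) /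
        (S k + ((∑ l, S l) - S k) * Real.exp (t - c)))
      (if i = k then -((S k / ∑ l, S l) * (1 - S k / ∑ l, S l))
       else (S i / ∑ l, S l) * (S k / ∑ l, S l)) c := by
  set D : ℝ := ∑ l, S l with hD
  have hDpos : 0 < D := Finset.sum_pos (fun l _ => hS l) univ_nonempty
  have he : HasDerivAt (fun t : ℝ => Real.exp (t - c)) 1 c := by
    have h1 : HasDerivAt (fun t : ℝ => t - c) 1 c := (hasDerivAt_id _).sub_const _
    simpa using h1.exp
  have hnum : HasDerivAt (fun t : ℝ => if i = k then S k else S i * Real.exp (t - c))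
      (if i = k then 0 else S i) c := by
    by_cases h : i = k
    · simp only [h, if_true]; exact hasDerivAt_const _ _
    · simp only [h, if_false]; simpa using he.const_mul (S i)
  have hgden : HasDerivAt (fun t : ℝ => S k + (D - S k) * Real.exp (t - c)) (D - S k) c := by
    simpa using (he.const_mul (D - S k)).const_add (S k)
  have hne : S k + (D - S k) * Real.exp (c - c) ≠ 0 := by
    rw [sub_self, Real.exp_zero, mul_one]
    have : S k + (D - S k) = D := by ring
    rw [this]; exact ne_of_gt hDpos
  have hdiv := hnum.div hgden hne
  refine hdiv.congr_deriv (Eq.symm ?_)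
  have hexp : Real.exp (c - c) = 1 := by rw [sub_self, Real.exp_zero]
  have hsum : S k + (D - S k) = D := by ring
  have hDne : D ≠ 0 := ne_of_gt hDpos
  by_cases h : i = k
  · simp only [h, if_true, hexp, mul_one]
    rw [hsum]
    have e1 : (0 * D - S k * (D - S k)) / D ^ 2 = -(S k * (D - S k) / D ^ 2) := by ring
    rw [e1, neg_inj, one_sub_div hDne, div_mul_div_comm, ← pow_two]
  · simp only [h, if_false, hexp, mul_one]
    rw [hsum]
    have e2 : S i * D - S i * (D - S k) = S i * S k := by ring
    rw [e2, div_mul_div_comm, ← pow_two]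

-- How the rates change under updating a single vertex parameter.
lemma rates_update {V : Type*} [DecidableEq V] (G : SimpleGraph V) (Bp : V → V → ℝ)
    (Ep : V → ℝ) (Fp : V → V → ℝ) (k : V) (t : ℝ) (a b : V) :
    rates G Bp (Function.update Ep k t) Fp a b =
      rates G Bp Ep Fp a b * (if b = k then Real.exp (t - Ep k) else 1) := by
  by_cases h : G.Adj a b
  · simp only [rates, if_pos h, Function.update_apply]
    by_cases hb : b = k
    · rw [if_pos hb, if_pos hb, ← Real.exp_add]
      subst hb
      congr 1
      ring
    · rw [if_neg hb, if_neg hb, mul_one]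
  · simp [rates, if_neg h]

lemma treeWeight_update {V : Type*} [Fintype V] [DecidableEq V] (G : SimpleGraph V)
    (Bp : V → V → ℝ) (Ep : V → ℝ) (Fp : V → V → ℝ) (k : V) (t : ℝ) (T : SimpleGraph V)
    (hT : IsSpanningTree G T) (l : V) :
    treeWeight (rates G Bp (Function.update Ep k t) Fp) T l =
      treeWeight (rates G Bp Ep Fp) T l * (if l = k then 1 else Real.exp (t - Ep k)) := by
  unfold treeWeight
  rw [Finset.prod_congr rfl (fun p _ => rates_update G Bp Ep Fp k t p.2 p.1)]
  rw [Finset.prod_mul_distrib, Finset.prod_ite, Finset.prod_const, Finset.prod_const_one,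
    mul_one]
  congr 1
  by_cases hlk : l = k
  · have hempt : ((Finset.univ.filter
        (fun p : V × V => T.Adj p.1 p.2 ∧ T.dist p.2 l + 1 = T.dist p.1 l)).filter
        (fun p : V × V => p.1 = k)) = ∅ := by
      apply Finset.eq_empty_iff_forall_notMem.2
      intro p hp
      simp only [Finset.mem_filter, Finset.mem_univ, true_and] at hp
      obtain ⟨⟨hadj, hdist⟩, hp1⟩ := hp
      rw [hp1, hlk, SimpleGraph.dist_self] at hdist
      omega
    rw [hempt]
    simp [hlk]
  · have hkl : k ≠ l := fun h => hlk h.symm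
    obtain ⟨j, hj, hjq⟩ := my_parent_unique hT.2 hkl
    have hsing : ((Finset.univ.filter
        (fun p : V × V => T.Adj p.1 p.2 ∧ T.dist p.2 l + 1 = T.dist p.1 l)).filter
        (fun p : V × V => p.1 = k)) = {(k, j)} := by
      ext p
      simp only [Finset.mem_filter, Finset.mem_univ, true_and, Finset.mem_singleton]
      constructor
      · rintro ⟨⟨hadj, hdist⟩, hp1⟩
        have h2 : p.2 = j := by
          apply hjq
          rw [← hp1]
          exact ⟨hadj, hdist⟩
        exact Prod.ext hp1 h2
      · rintro rfl
        exact ⟨⟨hj.1, hj.2⟩, rfl⟩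
    rw [hsing]
    simp [if_neg hlk]

lemma sumTrees_update {V : Type*} [Fintype V] [DecidableEq V] (G : SimpleGraph V)
    (Bp : V → V → ℝ) (Ep : V → ℝ) (Fp : V → V → ℝ) (k : V) (t : ℝ) (l : V) :
    sumTrees (rates G Bp (Function.update Ep k t) Fp) G l =
      sumTrees (rates G Bp Ep Fp) G l * (if l = k then 1 else Real.exp (t - Ep k)) := by
  unfold sumTrees
  rw [Finset.sum_mul]
  apply Finset.sum_congr rfl
  intro T hT
  exact treeWeight_update G Bp Ep Fp k t T (Finset.mem_filter.mp hT).2 l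

lemma sumTrees_pos {V : Type*} [Fintype V] [DecidableEq V] (G : SimpleGraph V)
    (hG : G.Connected) (Bp : V → V → ℝ) (Ep : V → ℝ) (Fp : V → V → ℝ) (l : V) :
    0 < sumTrees (rates G Bp Ep Fp) G l := by
  unfold sumTrees
  apply Finset.sum_pos
  · intro T hT
    have hsp : IsSpanningTree G T := (Finset.mem_filter.mp hT).2
    unfold treeWeight
    apply Finset.prod_pos
    intro p hp
    have hadj : T.Adj p.1 p.2 := ((Finset.mem_filter.mp hp).2).1
    have hGadj : G.Adj p.2 p.1 := hsp.1 hadj.symm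
    simp only [rates, if_pos hGadj]
    exact Real.exp_pos _
  · obtain ⟨T, hle, htree⟩ := my_exists_spanning_tree G.edgeSet.ncard G rfl hG
    exact ⟨T, Finset.mem_filter.mpr ⟨Finset.mem_univ _, hle, htree⟩⟩

end Auxiliary

/-- response of the steady state to a vertex perturbation:
`∂π_i/∂E_k = -π_k(1-π_k)` if `i = k` and `π_i π_k` otherwise. -/
theorem stmt1 {V : Type*} [Fintype V] [DecidableEq V]
    (G : SimpleGraph V) (hG : G.Connected)
    (Bp : V → V → ℝ) (Ep : V → ℝ) (Fp : V → V → ℝ)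
    (hB : ∀ i j, Bp i j = Bp j i) (hF : ∀ i j, Fp i j = -Fp j i)
    (i k : V) :
    HasDerivAt (fun t => piP G Bp (Function.update Ep k t) Fp i)
      (if i = k then -(piP G Bp Ep Fp k * (1 - piP G Bp Ep Fp k))
       else piP G Bp Ep Fp i * piP G Bp Ep Fp k) (Ep k) := by
  haveI : Nonempty V := hG.nonempty
  have hSpos : ∀ l, 0 < sumTrees (rates G Bp Ep Fp) G l :=
    fun l => sumTrees_pos G hG Bp Ep Fp l
  set S : V → ℝ := fun l => sumTrees (rates G Bp Ep Fp) G l with hSdef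
  have hden : ∀ t : ℝ, (∑ l, S l * (if l = k then 1 else Real.exp (t - Ep k)))
      = S k + ((∑ l, S l) - S k) * Real.exp (t - Ep k) := by
    intro t
    have hterm : ∀ l, S l * (if l = k then 1 else Real.exp (t - Ep k))
        = S l * Real.exp (t - Ep k) +
          (if l = k then S l * (1 - Real.exp (t - Ep k)) else 0) := by
      intro l
      by_cases h : l = k <;> simp [h] <;> ring
    rw [Finset.sum_congr rfl (fun l _ => hterm l), Finset.sum_add_distrib,
      Finset.sum_ite_eq' Finset.univ k, ← Finset.sum_mul]
    simp only [Finset.mem_univ, if_true]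
    ring
  have hkey : ∀ t : ℝ, piP G Bp (Function.update Ep k t) Fp i
      = (if i = k then S k else S i * Real.exp (t - Ep k)) /
        (S k + ((∑ l, S l) - S k) * Real.exp (t - Ep k)) := by
    intro t
    unfold piP mttPi
    rw [sumTrees_update G Bp Ep Fp k t i,
      Finset.sum_congr rfl (fun l _ => sumTrees_update G Bp Ep Fp k t l)]
    rw [show (∑ l, sumTrees (rates G Bp Ep Fp) G l *
        (if l = k then 1 else Real.exp (t - Ep k)))
      = S k + ((∑ l, S l) - S k) * Real.exp (t - Ep k) from hden t]
    congr 1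
    by_cases h : i = k <;> simp [h, hSdef]
  have hfe : (fun t => piP G Bp (Function.update Ep k t) Fp i)
      = fun t => (if i = k then S k else S i * Real.exp (t - Ep k)) /
        (S k + ((∑ l, S l) - S k) * Real.exp (t - Ep k)) := funext hkey
  rw [hfe]
  have hpi : ∀ m, piP G Bp Ep Fp m = S m / ∑ l, S l := fun m => rfl
  have hval : (if i = k then -(piP G Bp Ep Fp k * (1 - piP G Bp Ep Fp k))
      else piP G Bp Ep Fp i * piP G Bp Ep Fp k)
      = (if i = k then -((S k / ∑ l, S l) * (1 - S k / ∑ l, S l))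
        else (S i / ∑ l, S l) * (S k / ∑ l, S l)) := by
    by_cases h : i = k <;> simp [h, hpi]
  rw [hval]
  exact main_calc S k i (Ep k) hSpos
end

section
/- For distinct states i ≠ j and any state k, the partial derivative of ln(π_i/π_j) with respect to the vertex parameter E_k equals -1 if i = k, equals 1 if j = k, and equals 0 if k is neither i nor j. -/
open Finset

attribute [local instance] Classical.propDecidable

section Aux

open SimpleGraph

variable {V : Type*}

/-- A connected graph on a finite vertex type has a spanning tree. -/
lemma my_exists_spanning_tree_s2 [Fintype V] (G : SimpleGraph V) (hG : G.Connected) :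
    ∃ T : SimpleGraph V, IsSpanningTree G T := by
  have hfin : Finite (SimpleGraph V) :=
    Finite.of_injective (fun H : SimpleGraph V => H.Adj)
      (fun a b h => SimpleGraph.ext h)
  have hwf : WellFoundedLT (SimpleGraph V) := Finite.to_wellFoundedLT
  obtain ⟨T, ⟨hTG, hTc⟩, hmin⟩ := hwf.wf.has_min {H : SimpleGraph V | H ≤ G ∧ H.Connected}
    ⟨G, le_refl G, hG⟩
  refine ⟨T, hTG, hTc, ?_⟩
  rw [SimpleGraph.isAcyclic_iff_forall_adj_isBridge]
  intro v w hvw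
  by_contra hbr
  rw [SimpleGraph.isBridge_iff] at hbr
  replace hbr := fun (_ : T.Adj v w) => hbr
  have hreach : (T \ SimpleGraph.fromEdgeSet {s(v, w)}).Reachable v w := by
    by_contra h; exact hbr hvw h
  set T' := T \ SimpleGraph.fromEdgeSet {s(v, w)} with hT'def
  have hle : T' ≤ T := sdiff_le
  have hstep : ∀ a b : V, T.Adj a b → T'.Reachable a b := by
    intro a b hab
    by_cases he : s(a, b) = s(v, w)
    · rw [Sym2.eq_iff] at he
      rcases he with ⟨rfl, rfl⟩ | ⟨rfl, rfl⟩
      · exact hreach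
      · exact hreach.symm
    · exact SimpleGraph.Adj.reachable (by
        simp only [hT'def, SimpleGraph.sdiff_adj, SimpleGraph.fromEdgeSet_adj]
        exact ⟨hab, fun hc => he (by simpa using hc.1)⟩)
  have hT'conn : T'.Connected := by
    rw [SimpleGraph.connected_iff]
    refine ⟨fun a b => ?_, hTc.nonempty⟩
    obtain ⟨p⟩ := hTc.preconnected a b
    induction p with
    | nil => exact SimpleGraph.Reachable.refl _
    | cons h q ih => exact (hstep _ _ h).trans ih
  have hlt : T' < T := by
    refine lt_of_le_of_ne hle (fun h => ?_)
    have : T'.Adj v w := h ▸ hvw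
    simp only [hT'def, SimpleGraph.sdiff_adj, SimpleGraph.fromEdgeSet_adj] at this
    exact this.2 ⟨rfl, hvw.ne⟩
  exact hmin T' ⟨hle.trans hTG, hT'conn⟩ hlt

/-- In a tree, every vertex `v ≠ r` has a neighbour strictly closer to `r`. -/
lemma my_exists_parent (T : SimpleGraph V) (hT : T.IsTree) (r v : V) (hv : v ≠ r) :
    ∃ u, T.Adj v u ∧ T.dist u r + 1 = T.dist v r := by
  obtain ⟨p, hp⟩ := (hT.isConnected.preconnected v r).exists_walk_length_eq_dist
  have hpos : 0 < T.dist v r := hT.isConnected.pos_dist_of_ne hv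
  cases p with
  | nil => exact absurd rfl hv
  | @cons _ u _ h q =>
    refine ⟨u, h, ?_⟩
    have h1 : T.dist u r ≤ q.length := SimpleGraph.dist_le q
    obtain ⟨q', hq'⟩ := (hT.isConnected.preconnected u r).exists_walk_length_eq_dist
    have h3 : T.dist v r ≤ (SimpleGraph.Walk.cons h q').length := SimpleGraph.dist_le _
    rw [SimpleGraph.Walk.length_cons, hq'] at h3
    rw [SimpleGraph.Walk.length_cons] at hp
    omega

/-- In a tree, the parent of `v` towards `r` is unique. -/
lemma my_parent_unique_s2 (T : SimpleGraph V) (hT : T.IsTree) (r v u₁ u₂ : V)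
    (h1 : T.Adj v u₁ ∧ T.dist u₁ r + 1 = T.dist v r)
    (h2 : T.Adj v u₂ ∧ T.dist u₂ r + 1 = T.dist v r) : u₁ = u₂ := by
  have build : ∀ u : V, T.Adj v u → T.dist u r + 1 = T.dist v r →
      ∃ p : T.Walk v r, p.IsPath ∧ p.getVert 1 = u := by
    intro u hadj hd
    obtain ⟨q, hq⟩ := (hT.isConnected.preconnected u r).exists_walk_length_eq_dist
    have hqpath : q.IsPath := SimpleGraph.Walk.isPath_of_length_eq_dist q hq
    have hvq : v ∉ q.support := by
      intro hmem
      have hdrop : T.dist v r ≤ (q.dropUntil v hmem).length := SimpleGraph.dist_le _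
      have hspec := SimpleGraph.Walk.take_spec q hmem
      have hlen : (q.takeUntil v hmem).length + (q.dropUntil v hmem).length = q.length := by
        rw [← SimpleGraph.Walk.length_append, hspec]
      omega
    exact ⟨SimpleGraph.Walk.cons hadj q, hqpath.cons hvq, by
      simp [SimpleGraph.Walk.getVert_cons_succ, SimpleGraph.Walk.getVert_zero]⟩
  obtain ⟨p₁, hp₁, hg₁⟩ := build u₁ h1.1 h1.2
  obtain ⟨p₂, hp₂, hg₂⟩ := build u₂ h2.1 h2.2
  obtain ⟨p, -, hpu⟩ := hT.existsUnique_path v r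
  have e1 : p₁ = p₂ := (hpu p₁ hp₁).trans (hpu p₂ hp₂).symm
  rw [← hg₁, ← hg₂, e1]

/-- The set of directed tree edges (towards root `r`) with source `k`:
empty if `k = r`, a singleton otherwise. -/
lemma my_sum_delta [Fintype V] [DecidableEq V] (T : SimpleGraph V) (hT : T.IsTree) (r k : V) (s : ℝ) :
    (∑ p ∈ Finset.univ.filter
        (fun p : V × V => T.Adj p.1 p.2 ∧ T.dist p.2 r + 1 = T.dist p.1 r),
      (if p.1 = k then s else 0)) = (if k = r then 0 else 1) * s := by
  rw [← Finset.sum_filter, Finset.filter_filter]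
  by_cases hk : k = r
  · subst hk
    rw [Finset.filter_false_of_mem, Finset.sum_empty, if_pos rfl, zero_mul]
    rintro p - ⟨⟨hadj, hd⟩, hpk⟩
    rw [hpk, SimpleGraph.dist_self] at hd
    omega
  · obtain ⟨u₀, hu₀adj, hu₀d⟩ := my_exists_parent T hT r k hk
    have hset : Finset.univ.filter
        (fun p : V × V => (T.Adj p.1 p.2 ∧ T.dist p.2 r + 1 = T.dist p.1 r) ∧ p.1 = k)
        = {(k, u₀)} := by
      rw [Finset.eq_singleton_iff_unique_mem]
      constructor
      · exact Finset.mem_filter.mpr ⟨Finset.mem_univ _, ⟨hu₀adj, hu₀d⟩, rfl⟩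
      · rintro ⟨a, b⟩ hab
        simp only [Finset.mem_filter, Finset.mem_univ, true_and] at hab
        obtain ⟨⟨hadj, hd⟩, rfl⟩ := hab
        have := my_parent_unique_s2 T hT r a b u₀ ⟨hadj, hd⟩ ⟨hu₀adj, hu₀d⟩
        rw [this]
    rw [hset, Finset.sum_singleton, if_neg hk, one_mul]

/-- How a rooted tree weight responds to a vertex perturbation. -/
lemma my_treeWeight_update [Fintype V] [DecidableEq V]
    (G T : SimpleGraph V) (hle : T ≤ G) (hT : T.IsTree)
    (Bp : V → V → ℝ) (Ep : V → ℝ) (Fp : V → V → ℝ) (k r : V) (t : ℝ) :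
    treeWeight (rates G Bp (Function.update Ep k t) Fp) T r
      = Real.exp ((if k = r then 0 else 1) * (t - Ep k))
        * treeWeight (rates G Bp Ep Fp) T r := by
  unfold treeWeight
  have hfac : ∀ p ∈ Finset.univ.filter
      (fun p : V × V => T.Adj p.1 p.2 ∧ T.dist p.2 r + 1 = T.dist p.1 r),
      rates G Bp (Function.update Ep k t) Fp p.2 p.1
        = Real.exp (if p.1 = k then t - Ep k else 0) * rates G Bp Ep Fp p.2 p.1 := by
    intro p hp
    simp only [Finset.mem_filter] at hp
    have hadj : G.Adj p.2 p.1 := hle hp.2.1.symm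
    unfold rates
    rw [if_pos hadj, if_pos hadj, ← Real.exp_add]
    congr 1
    simp only [Function.update_apply]
    split_ifs with h
    · rw [h]; ring
    · ring
  rw [Finset.prod_congr rfl hfac, Finset.prod_mul_distrib, ← Real.exp_sum,
    my_sum_delta T hT r k (t - Ep k)]

lemma my_rates_pos (G : SimpleGraph V) (Bp : V → V → ℝ) (Ep : V → ℝ) (Fp : V → V → ℝ)
    {a b : V} (h : G.Adj a b) : 0 < rates G Bp Ep Fp a b := by
  unfold rates
  rw [if_pos h]
  exact Real.exp_pos _

lemma my_treeWeight_pos [Fintype V] (G T : SimpleGraph V) (hle : T ≤ G)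
    (Bp : V → V → ℝ) (Ep : V → ℝ) (Fp : V → V → ℝ) (r : V) :
    0 < treeWeight (rates G Bp Ep Fp) T r := by
  unfold treeWeight
  refine Finset.prod_pos ?_
  intro p hp
  simp only [Finset.mem_filter] at hp
  exact my_rates_pos G Bp Ep Fp (hle hp.2.1.symm)

lemma my_sumTrees_pos [Fintype V] [DecidableEq V] (G : SimpleGraph V) (hG : G.Connected)
    (Bp : V → V → ℝ) (Ep : V → ℝ) (Fp : V → V → ℝ) (r : V) :
    0 < sumTrees (rates G Bp Ep Fp) G r := by
  unfold sumTrees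
  obtain ⟨T₀, hT₀⟩ := my_exists_spanning_tree_s2 G hG
  refine Finset.sum_pos ?_ ⟨T₀, by simp [hT₀]⟩
  intro T hTmem
  simp only [Finset.mem_filter] at hTmem
  exact my_treeWeight_pos G T hTmem.2.1 Bp Ep Fp r

lemma my_sumTrees_update [Fintype V] [DecidableEq V] (G : SimpleGraph V)
    (Bp : V → V → ℝ) (Ep : V → ℝ) (Fp : V → V → ℝ) (k r : V) (t : ℝ) :
    sumTrees (rates G Bp (Function.update Ep k t) Fp) G r
      = Real.exp ((if k = r then 0 else 1) * (t - Ep k))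
        * sumTrees (rates G Bp Ep Fp) G r := by
  unfold sumTrees
  rw [Finset.mul_sum]
  refine Finset.sum_congr rfl ?_
  intro T hT
  simp only [Finset.mem_filter] at hT
  exact my_treeWeight_update G T hT.2.1 hT.2.2 Bp Ep Fp k r t

end Aux

/-- response of the log-ratio `ln(π_i/π_j)` (`i ≠ j`) to a vertex
perturbation: `-1` if `i = k`, `1` if `j = k`, and `0` otherwise. -/
theorem stmt2 {V : Type*} [Fintype V] [DecidableEq V]
    (G : SimpleGraph V) (hG : G.Connected)
    (Bp : V → V → ℝ) (Ep : V → ℝ) (Fp : V → V → ℝ)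
    (hB : ∀ i j, Bp i j = Bp j i) (hF : ∀ i j, Fp i j = -Fp j i)
    (i j k : V) (hij : i ≠ j) :
    HasDerivAt
      (fun t => Real.log (piP G Bp (Function.update Ep k t) Fp i /
                          piP G Bp (Function.update Ep k t) Fp j))
      (if i = k then (-1 : ℝ) else if j = k then 1 else 0) (Ep k) := by
  set c : ℝ := if i = k then (-1 : ℝ) else if j = k then 1 else 0 with hc
  have hSi := my_sumTrees_pos G hG Bp Ep Fp i
  have hSj := my_sumTrees_pos G hG Bp Ep Fp j
  have hcc : (if k = i then (0 : ℝ) else 1) - (if k = j then 0 else 1) = c := by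
    by_cases hik : i = k
    · subst hik
      simp [hc, hij, hij.symm, Ne.symm hij]
    · by_cases hjk : j = k
      · subst hjk
        simp [hc, hik, fun h : j = i => hij h.symm, Ne.symm hik]
      · simp [hc, hik, hjk, Ne.symm hik, Ne.symm hjk]
  have key : ∀ t : ℝ,
      Real.log (piP G Bp (Function.update Ep k t) Fp i /
                piP G Bp (Function.update Ep k t) Fp j)
        = c * (t - Ep k)
          + Real.log (sumTrees (rates G Bp Ep Fp) G i / sumTrees (rates G Bp Ep Fp) G j) := by
    intro t
    have hD : 0 < ∑ l : V, sumTrees (rates G Bp (Function.update Ep k t) Fp) G l :=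
      Finset.sum_pos (fun l _ => my_sumTrees_pos G hG Bp _ Fp l) ⟨i, Finset.mem_univ i⟩
    unfold piP mttPi
    rw [div_div_div_comm, div_self (ne_of_gt hD), div_one,
      my_sumTrees_update, my_sumTrees_update,
      Real.log_div (mul_pos (Real.exp_pos _) hSi).ne' (mul_pos (Real.exp_pos _) hSj).ne',
      Real.log_mul (Real.exp_ne_zero _) hSi.ne', Real.log_mul (Real.exp_ne_zero _) hSj.ne',
      Real.log_exp, Real.log_exp, Real.log_div hSi.ne' hSj.ne', ← hcc]
    ring
  rw [funext key]
  have hd : HasDerivAt (fun t : ℝ => c * (t - Ep k)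
      + Real.log (sumTrees (rates G Bp Ep Fp) G i / sumTrees (rates G Bp Ep Fp) G j))
      (c * 1) (Ep k) :=
    (((hasDerivAt_id (Ep k)).sub_const (Ep k)).const_mul c).add_const _
  simpa using hd
end

section
/- (Cycle-flip lemma) For any spanning trees T, S of G and any vertices i, j of G, w(T_i) w(S_j) / (w(T_j) w(S_i)) ≤ exp(F_{i↔j}). -/
open Finset

attribute [local instance] Classical.propDecidable

namespace Stmt8Aux
open SimpleGraph Walk Finset

variable {V : Type*} {T : SimpleGraph V}

lemma isPath_concat {u v w : V} {p : T.Walk u v} (hp : p.IsPath) (h : T.Adj v w)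
    (hw : w ∉ p.support) : (p.concat h).IsPath := by
  rw [← isPath_reverse_iff, reverse_concat]
  refine IsPath.cons hp.reverse ?_
  simpa [support_reverse] using hw

lemma path_length_eq_dist (hT : T.IsTree) {a b : V} {p : T.Walk a b} (hp : p.IsPath) :
    p.length = T.dist a b := by
  obtain ⟨q, hq⟩ := (hT.isConnected a b).exists_walk_length_eq_dist
  have h1 : p = q.bypass := (hT.existsUnique_path a b).unique hp q.bypass_isPath
  have := q.length_bypass_le
  have h2 : T.dist a b ≤ p.length := dist_le p
  have h3 : p.length = q.bypass.length := by rw [h1]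
  omega

/-- The unique path between two vertices in a tree. -/
noncomputable def thePath (hT : T.IsTree) (v r : V) : T.Walk v r :=
  (hT.existsUnique_path v r).choose

lemma thePath_isPath (hT : T.IsTree) (v r : V) : (thePath hT v r).IsPath :=
  (hT.existsUnique_path v r).choose_spec.1

lemma thePath_unique (hT : T.IsTree) {v r : V} {p : T.Walk v r} (hp : p.IsPath) :
    p = thePath hT v r :=
  (hT.existsUnique_path v r).choose_spec.2 p hp

/-- Parent of `v` towards the root `r`. -/
noncomputable def par (hT : T.IsTree) (r v : V) : V := (thePath hT v r).getVert 1

lemma par_eq_getVert (hT : T.IsTree) {v r : V} {p : T.Walk v r} (hp : p.IsPath) :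
    par hT r v = p.getVert 1 := by
  rw [par, ← thePath_unique hT hp]

lemma cond_iff (hT : T.IsTree) (r v u : V) :
    (T.Adj v u ∧ T.dist u r + 1 = T.dist v r) ↔ (v ≠ r ∧ u = par hT r v) := by
  constructor
  · rintro ⟨hadj, hd⟩
    have hvr : v ≠ r := by
      rintro rfl
      simp [SimpleGraph.dist_self] at hd
    refine ⟨hvr, ?_⟩
    set q := thePath hT u r with hqdef
    have hq : q.IsPath := thePath_isPath hT u r
    have hql : q.length = T.dist u r := path_length_eq_dist hT hq
    have hvq : v ∉ q.support := by
      intro hmem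
      have hd1 : (q.dropUntil v hmem).length = T.dist v r :=
        path_length_eq_dist hT (hq.dropUntil hmem)
      have hd2 := q.length_dropUntil_le hmem
      omega
    have hcons : (Walk.cons hadj q).IsPath := hq.cons hvq
    have := par_eq_getVert hT hcons
    simp [Walk.getVert_cons_succ, Walk.getVert_zero] at this
    exact this.symm
  · rintro ⟨hvr, rfl⟩
    set p := thePath hT v r with hpdef
    have hp : p.IsPath := thePath_isPath hT v r
    have hpl : p.length = T.dist v r := path_length_eq_dist hT hp
    have hnn : ¬ p.Nil := by
      intro hnil
      exact hvr (Walk.Nil.eq hnil)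
    obtain ⟨w, h, q, hq⟩ := Walk.not_nil_iff.mp hnn
    have hg : p.getVert 1 = w := by
      rw [hq]
      simp [Walk.getVert_cons_succ, Walk.getVert_zero]
    have hqp : q.IsPath := by
      rw [hq] at hp; exact hp.of_cons
    have hql : q.length = T.dist w r := path_length_eq_dist hT hqp
    have hlen : p.length = q.length + 1 := by rw [hq]; simp
    rw [par, ← hpdef, hg]
    exact ⟨h, by omega⟩

lemma par_adj (hT : T.IsTree) {i j : V} (hij : T.Adj i j) : par hT i j = i := by
  have hp : (Walk.cons hij.symm (Walk.nil : T.Walk i i)).IsPath := by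
    simp [hij.ne']
  have := par_eq_getVert hT hp
  simpa [Walk.getVert_cons_succ, Walk.getVert_zero] using this

lemma par_eq_par (hT : T.IsTree) {i j v : V} (hij : T.Adj i j) (hvi : v ≠ i) (hvj : v ≠ j) :
    par hT i v = par hT j v := by
  set p := thePath hT v i with hpdef
  have hp : p.IsPath := thePath_isPath hT v i
  have hnn : ¬ p.Nil := fun hnil => hvi (Walk.Nil.eq hnil)
  obtain ⟨w, h, q, hq⟩ := Walk.not_nil_iff.mp hnn
  have hqp : q.IsPath := by rw [hq] at hp; exact hp.of_cons
  have hvq : v ∉ q.support := by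
    rw [hq] at hp
    exact ((Walk.cons_isPath_iff _ _).mp hp).2
  have hpi : par hT i v = w := by
    have := par_eq_getVert hT hp
    rw [hq] at this
    simpa [Walk.getVert_cons_succ, Walk.getVert_zero] using this
  rw [hpi]
  by_cases hjq : j ∈ q.support
  · -- path to j is a prefix
    have ht : (Walk.cons h (q.takeUntil j hjq)).IsPath := by
      refine (hqp.takeUntil hjq).cons ?_
      intro hmem
      exact hvq (q.support_takeUntil_subset hjq hmem)
    have := par_eq_getVert hT ht
    simpa [Walk.getVert_cons_succ, Walk.getVert_zero] using this.symm
  · -- extend the path through the edge i-j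
    have hjp : j ∉ p.support := by
      rw [hq]
      simp only [Walk.support_cons, List.mem_cons]
      push_neg
      exact ⟨fun hh => hvj hh.symm, hjq⟩
    have ht : (p.concat hij).IsPath := isPath_concat hp hij hjp
    rw [hq, Walk.concat_cons] at ht
    have := par_eq_getVert hT ht
    simpa [Walk.getVert_cons_succ, Walk.getVert_zero] using this.symm


variable [Fintype V] [DecidableEq V] (W : V → V → ℝ)

lemma filter_eq (hT : T.IsTree) (r : V) :
    Finset.univ.filter
      (fun p : V × V => T.Adj p.1 p.2 ∧ T.dist p.2 r + 1 = T.dist p.1 r)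
    = (Finset.univ.filter (fun v => v ≠ r)).image (fun v => (v, par hT r v)) := by
  ext ⟨a, b⟩
  simp only [mem_filter, mem_univ, true_and, mem_image, Prod.mk.injEq]
  rw [cond_iff hT r a b]
  constructor
  · rintro ⟨h1, h2⟩; exact ⟨a, h1, rfl, h2.symm⟩
  · rintro ⟨v, hv, rfl, rfl⟩; exact ⟨hv, rfl⟩

lemma treeWeight_eq (hT : T.IsTree) (r : V) :
    treeWeight W T r = ∏ v ∈ Finset.univ.filter (fun v => v ≠ r), W (par hT r v) v := by
  rw [treeWeight, filter_eq hT r, Finset.prod_image]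
  intro x _ y _ h
  exact congrArg Prod.fst h

lemma flipEdge (hT : T.IsTree) {i j : V} (hij : T.Adj i j) :
    treeWeight W T i * W j i = treeWeight W T j * W i j := by
  have hne : i ≠ j := hij.ne
  rw [treeWeight_eq W hT i, treeWeight_eq W hT j]
  have hset_i : Finset.univ.filter (fun v => v ≠ i)
      = insert j (Finset.univ.filter (fun v => v ≠ i ∧ v ≠ j)) := by
    ext v
    by_cases hv : v = j <;> simp [hv, hij.ne', hne] <;> tauto
  have hset_j : Finset.univ.filter (fun v => v ≠ j)
      = insert i (Finset.univ.filter (fun v => v ≠ i ∧ v ≠ j)) := by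
    ext v
    by_cases hv : v = i <;> simp [hv, hij.ne', hne] <;> tauto
  rw [hset_i, hset_j, Finset.prod_insert (by simp), Finset.prod_insert (by simp),
    par_adj hT hij, par_adj hT hij.symm]
  have hprod : ∏ v ∈ Finset.univ.filter (fun v => v ≠ i ∧ v ≠ j), W (par hT i v) v
      = ∏ v ∈ Finset.univ.filter (fun v => v ≠ i ∧ v ≠ j), W (par hT j v) v := by
    refine Finset.prod_congr rfl (fun v hv => ?_)
    simp only [mem_filter, mem_univ, true_and] at hv
    rw [par_eq_par hT hij hv.1 hv.2]
  rw [hprod]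
  ring

lemma walkWeight_nil {G : SimpleGraph V} {u : V} :
    walkWeight W (Walk.nil : G.Walk u u) = 1 := by simp [walkWeight]

lemma walkWeight_cons {G : SimpleGraph V} {u v w : V} (h : G.Adj u v) (p : G.Walk v w) :
    walkWeight W (Walk.cons h p) = W v u * walkWeight W p := by
  simp [walkWeight, Walk.darts_cons]

lemma walkWeight_append {G : SimpleGraph V} {u v w : V} (p : G.Walk u v) (q : G.Walk v w) :
    walkWeight W (p.append q) = walkWeight W p * walkWeight W q := by
  simp [walkWeight, Walk.darts_append]

lemma tele (hT : T.IsTree) {a b : V} (p : T.Walk a b) :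
    treeWeight W T a * walkWeight W p = treeWeight W T b * walkWeight W p.reverse := by
  induction p with
  | nil => simp
  | @cons u v w h q ih =>
    rw [walkWeight_cons, Walk.reverse_cons, walkWeight_append, walkWeight_cons,
      walkWeight_nil]
    have h1 := flipEdge W hT h
    linear_combination walkWeight W q * h1 + W u v * ih

lemma walkWeight_mapLe {G G' : SimpleGraph V} (hle : G ≤ G') {u v : V} (p : G.Walk u v) :
    walkWeight W (p.mapLe hle) = walkWeight W p := by
  induction p with
  | nil => simp [walkWeight]
  | cons h q ih => simp [Walk.map_cons, walkWeight_cons, ih]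

lemma walkWeight_pos (hle : T ≤ transGraph W) {u v : V} (p : T.Walk u v) :
    0 < walkWeight W p := by
  induction p with
  | nil => simp [walkWeight]
  | cons h q ih =>
    rw [walkWeight_cons]
    exact mul_pos ((hle h).2.2) ih

lemma treeWeight_pos (hle : T ≤ transGraph W) (r : V) : 0 < treeWeight W T r := by
  refine Finset.prod_pos (fun p hp => ?_)
  simp only [mem_filter, mem_univ, true_and] at hp
  exact (hle hp.1).2.2

end Stmt8Aux

open Stmt8Aux SimpleGraph Walk in
/-- cycle-flip lemma: for spanning trees `T, S` and vertices
`i, j`, `w(T_i)w(S_j)/(w(T_j)w(S_i)) ≤ exp(F_{i↔j})`. -/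
theorem stmt8 {V : Type*} [Fintype V] [DecidableEq V] (W : V → V → ℝ)
    (hoff : ∀ i j, i ≠ j → 0 ≤ W i j)
    (hsym : ∀ i j, i ≠ j → (0 < W i j ↔ 0 < W j i))
    (hconn : (transGraph W).Connected)
    (T S : SimpleGraph V)
    (hT : IsSpanningTree (transGraph W) T) (hS : IsSpanningTree (transGraph W) S)
    (i j : V) :
    treeWeight W T i * treeWeight W S j / (treeWeight W T j * treeWeight W S i)
      ≤ Real.exp (Fbtw W (transGraph W) i j) := by
  classical
  set G := transGraph W with hG
  -- paths in T and S
  let P : T.Walk i j := ((hT.2.isConnected.preconnected i j).some).bypass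
  have hP : P.IsPath := Walk.bypass_isPath _
  let Q : S.Walk j i := ((hS.2.isConnected.preconnected j i).some).bypass
  have hQ : Q.IsPath := Walk.bypass_isPath _
  set a1 := walkWeight W P with ha1
  set a2 := walkWeight W Q with ha2
  set b1 := walkWeight W P.reverse with hb1
  set b2 := walkWeight W Q.reverse with hb2
  have ha1p : 0 < a1 := walkWeight_pos W hT.1 P
  have ha2p : 0 < a2 := walkWeight_pos W hS.1 Q
  have hb1p : 0 < b1 := walkWeight_pos W hT.1 P.reverse
  have hb2p : 0 < b2 := walkWeight_pos W hS.1 Q.reverse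
  have hTi : 0 < treeWeight W T i := treeWeight_pos W hT.1 i
  have hTj : 0 < treeWeight W T j := treeWeight_pos W hT.1 j
  have hSi : 0 < treeWeight W S i := treeWeight_pos W hS.1 i
  have hSj : 0 < treeWeight W S j := treeWeight_pos W hS.1 j
  have tele1 := tele W hT.2 P
  have tele2 := tele W hS.2 Q
  have hratio : treeWeight W T i * treeWeight W S j / (treeWeight W T j * treeWeight W S i)
      = (b1 * b2) / (a1 * a2) := by
    rw [div_eq_div_iff (by positivity) (by positivity)]
    linear_combination (treeWeight W S j * a2) * tele1 + (treeWeight W T j * b1) * tele2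
  -- the element of the Fbtw set
  set x0 : ℝ := |Real.log (a1 * a2 / (b1 * b2))| with hx0
  set SS : Set ℝ := {x : ℝ | ∃ (p : G.Walk i j) (q : G.Walk j i), p.IsPath ∧ q.IsPath ∧
    x = |Real.log (walkWeight W p * walkWeight W q /
          (walkWeight W p.reverse * walkWeight W q.reverse))|} with hSS
  have hFb : Fbtw W G i j = sSup SS := rfl
  have hmem : x0 ∈ SS := by
    refine ⟨P.mapLe hT.1, Q.mapLe hS.1, hP.mapLe hT.1, hQ.mapLe hS.1, ?_⟩
    have e1 : walkWeight W (P.mapLe hT.1) = a1 := walkWeight_mapLe W hT.1 P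
    have e2 : walkWeight W (Q.mapLe hS.1) = a2 := walkWeight_mapLe W hS.1 Q
    have e3 : walkWeight W (P.mapLe hT.1).reverse = b1 := by
      rw [show (P.mapLe hT.1).reverse = P.reverse.mapLe hT.1 from Walk.reverse_map _ P]
      exact walkWeight_mapLe W hT.1 P.reverse
    have e4 : walkWeight W (Q.mapLe hS.1).reverse = b2 := by
      rw [show (Q.mapLe hS.1).reverse = Q.reverse.mapLe hS.1 from Walk.reverse_map _ Q]
      exact walkWeight_mapLe W hS.1 Q.reverse
    rw [e1, e2, e3, e4]
  have hbdd : BddAbove SS := by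
    have : SS = Set.range (fun pq : G.Path i j × G.Path j i =>
        |Real.log (walkWeight W pq.1.val * walkWeight W pq.2.val /
          (walkWeight W pq.1.val.reverse * walkWeight W pq.2.val.reverse))|) := by
      ext x
      constructor
      · rintro ⟨p, q, hp, hq, rfl⟩
        exact ⟨(⟨p, hp⟩, ⟨q, hq⟩), rfl⟩
      · rintro ⟨⟨p, q⟩, rfl⟩
        exact ⟨p.val, q.val, p.prop, q.prop, rfl⟩
    rw [this]
    exact (Set.finite_range _).bddAbove
  have hle : Real.log ((b1 * b2) / (a1 * a2)) ≤ x0 := by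
    have hrw : (b1 * b2) / (a1 * a2) = (a1 * a2 / (b1 * b2))⁻¹ := by
      rw [inv_div]
    rw [hrw, Real.log_inv, hx0]
    exact neg_le_abs _
  rw [hratio, hFb]
  calc (b1 * b2) / (a1 * a2) = Real.exp (Real.log ((b1 * b2) / (a1 * a2))) := by
        rw [Real.exp_log (by positivity)]
    _ ≤ Real.exp (sSup SS) := by
        apply Real.exp_le_exp.mpr
        exact hle.trans (le_csSup hbdd hmem)
end

section
/- Let i ≤ j be integers and let a_n > 0 and b_n > 0 for i ≤ n ≤ j. Then |(∑_{n=i}^j n a_n)(∑_{n=i}^j b_n) - (∑_{n=i}^j n b_n)(∑_{n=i}^j a_n)| / ((∑_{n=i}^j a_n)(∑_{n=i}^j b_n)) ≤ ∑_{m=i+1}^j tanh( (1/4) |ln( (∑_{n=m}^j a_n)(∑_{n=i}^{m-1} b_n) / ((∑_{n=m}^j b_n)(∑_{n=i}^{m-1} a_n)) )| ). -/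
open Finset Real

lemma icc_split (i m j : ℤ) (him : i + 1 ≤ m) (hmj : m ≤ j) (f : ℤ → ℝ) :
    ∑ n ∈ Icc i j, f n = ∑ n ∈ Icc i (m-1), f n + ∑ n ∈ Icc m j, f n := by
  rw [← Finset.sum_union]
  · congr 1
    ext x
    simp only [Finset.mem_union, Finset.mem_Icc]
    omega
  · rw [Finset.disjoint_left]
    intro x hx hx'
    simp only [Finset.mem_Icc] at hx hx'
    omega

lemma icc_insert (i j : ℤ) (hij : i ≤ j + 1) :
    Icc i (j+1) = insert (j+1) (Icc i j) := by
  ext x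
  simp only [Finset.mem_insert, Finset.mem_Icc]
  omega

lemma sum_identity (i j : ℤ) (hij : i ≤ j) (f : ℤ → ℝ) :
    ∑ n ∈ Icc i j, (n : ℝ) * f n
      = i * ∑ n ∈ Icc i j, f n + ∑ m ∈ Icc (i+1) j, ∑ n ∈ Icc m j, f n := by
  refine Int.le_induction (motive := fun j _ => ∑ n ∈ Icc i j, (n : ℝ) * f n = i * ∑ n ∈ Icc i j, f n + ∑ m ∈ Icc (i+1) j, ∑ n ∈ Icc m j, f n) ?_ ?_ j hij
  ·
    show _ = _
    rw [Finset.Icc_self, Finset.Icc_eq_empty (by omega)]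
    simp
  · intro j hj ih
    have h1 : Icc i (j+1) = insert (j+1) (Icc i j) := icc_insert i j (by omega)
    have h2 : Icc (i+1) (j+1) = insert (j+1) (Icc (i+1) j) := icc_insert (i+1) j (by omega)
    have hni : (j+1) ∉ Icc i j := by simp [Finset.mem_Icc]
    have hni2 : (j+1) ∉ Icc (i+1) j := by simp [Finset.mem_Icc]
    rw [h1, h2, Finset.sum_insert hni, Finset.sum_insert hni, Finset.sum_insert hni2, ih]
    have h3 : ∀ m ∈ Icc (i+1) j, ∑ n ∈ Icc m (j+1), f n = ∑ n ∈ Icc m j, f n + f (j+1) := by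
      intro m hm
      simp only [Finset.mem_Icc] at hm
      rw [icc_insert m j (by omega), Finset.sum_insert (by simp [Finset.mem_Icc]), add_comm]
    rw [Finset.sum_congr rfl h3, Finset.sum_add_distrib, Finset.sum_const,
      Finset.Icc_self, Finset.sum_singleton]
    have hcard : (#(Icc (i+1) j) : ℝ) = (j : ℝ) - (i : ℝ) := by
      rw [Int.card_Icc]
      have : ((j + 1 - (i+1)).toNat : ℤ) = j - i := by omega
      have : ((j + 1 - (i+1)).toNat : ℝ) = (j : ℝ) - i := by exact_mod_cast this
      simpa using this
    rw [nsmul_eq_mul, hcard]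
    push_cast
    ring
open Real

-- tanh((1/4)|log(x/y)|) = |√x - √y|/(√x + √y), for the case y ≤ x first
lemma tanh_formula_le {x y : ℝ} (hy : 0 < y) (hyx : y ≤ x) :
    Real.tanh ((1/4) * |Real.log (x/y)|) = (Real.sqrt x - Real.sqrt y) / (Real.sqrt x + Real.sqrt y) := by
  have hx : 0 < x := lt_of_lt_of_le hy hyx
  have hxy : (1:ℝ) ≤ x / y := (one_le_div hy).mpr hyx
  have hlog : 0 ≤ Real.log (x/y) := Real.log_nonneg hxy
  rw [abs_of_nonneg hlog]
  set t := (1/4) * Real.log (x/y) with ht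
  have hsq : Real.exp t ^ 2 = Real.sqrt x / Real.sqrt y := by
    rw [← Real.exp_nat_mul]
    have : (2:ℝ) * t = Real.log (Real.sqrt (x/y)) := by
      rw [Real.log_sqrt (by positivity)]
      ring
    push_cast
    rw [this, Real.exp_log (Real.sqrt_pos.mpr (by positivity)), Real.sqrt_div hx.le]
  have hsx : 0 < Real.sqrt x := Real.sqrt_pos.mpr hx
  have hsy : 0 < Real.sqrt y := Real.sqrt_pos.mpr hy
  have hu : 0 < Real.exp t := Real.exp_pos t
  have hsq2 : Real.exp t ^ 2 * Real.sqrt y = Real.sqrt x := by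
    rw [hsq]; field_simp
  rw [Real.tanh_eq_sinh_div_cosh, Real.sinh_eq, Real.cosh_eq, Real.exp_neg]
  have hden : (0:ℝ) < Real.exp t + (Real.exp t)⁻¹ := by positivity
  field_simp
  nlinarith [hsq2, hu, hsx, hsy, mul_pos hsx hsy, sq_nonneg (Real.exp t)]

lemma tanh_formula {x y : ℝ} (hx : 0 < x) (hy : 0 < y) :
    Real.tanh ((1/4) * |Real.log (x/y)|) = |Real.sqrt x - Real.sqrt y| / (Real.sqrt x + Real.sqrt y) := by
  rcases le_total y x with h | h
  · rw [tanh_formula_le hy h, abs_of_nonneg (by simp [Real.sqrt_le_sqrt h, sub_nonneg])]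
  · have : Real.log (x/y) = - Real.log (y/x) := by
      rw [← Real.log_inv]
      congr 1
      field_simp
    rw [this, abs_neg, tanh_formula_le hx h, abs_of_nonpos (by simp [Real.sqrt_le_sqrt h, sub_nonpos]), add_comm]
    rw [neg_sub]

-- key termwise bound
lemma key_bound {Sa Sb Ta Tb : ℝ} (hSa : 0 < Sa) (hSb : 0 < Sb) (hTa : 0 < Ta) (hTb : 0 < Tb) :
    |Sa * (Tb + Sb) - Sb * (Ta + Sa)| / ((Ta + Sa) * (Tb + Sb))
      ≤ Real.tanh ((1/4) * |Real.log (Sa * Tb / (Sb * Ta))|) := by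
  set x := Sa * Tb with hxdef
  set y := Sb * Ta with hydef
  have hx : 0 < x := mul_pos hSa hTb
  have hy : 0 < y := mul_pos hSb hTa
  rw [tanh_formula hx hy]
  have hsx : 0 < Real.sqrt x := Real.sqrt_pos.mpr hx
  have hsy : 0 < Real.sqrt y := Real.sqrt_pos.mpr hy
  have hnum : Sa * (Tb + Sb) - Sb * (Ta + Sa) = x - y := by rw [hxdef, hydef]; ring
  have habs : |x - y| = |Real.sqrt x - Real.sqrt y| * (Real.sqrt x + Real.sqrt y) := by
    rw [← abs_of_pos (show (0:ℝ) < Real.sqrt x + Real.sqrt y by positivity), ← abs_mul]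
    congr 1
    nlinarith [Real.sq_sqrt hx.le, Real.sq_sqrt hy.le]
  have hAB : (Real.sqrt x + Real.sqrt y)^2 ≤ (Ta + Sa) * (Tb + Sb) := by
    have h1 : Real.sqrt x * Real.sqrt y = Real.sqrt (x * y) := (Real.sqrt_mul hx.le y).symm
    have h2 : Real.sqrt (x*y) = Real.sqrt (Sa * Sb) * Real.sqrt (Ta * Tb) := by
      rw [← Real.sqrt_mul (by positivity)]
      congr 1
      ring
    nlinarith [Real.sq_sqrt hx.le, Real.sq_sqrt hy.le,
      Real.sq_sqrt (mul_pos hSa hSb).le, Real.sq_sqrt (mul_pos hTa hTb).le,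
      sq_nonneg (Real.sqrt (Sa*Sb) - Real.sqrt (Ta*Tb)),
      Real.sqrt_nonneg (Sa*Sb), Real.sqrt_nonneg (Ta*Tb)]
  have hABpos : 0 < (Ta + Sa) * (Tb + Sb) := by positivity
  rw [hnum, habs]
  calc |Real.sqrt x - Real.sqrt y| * (Real.sqrt x + Real.sqrt y) / ((Ta + Sa) * (Tb + Sb))
      ≤ |Real.sqrt x - Real.sqrt y| * (Real.sqrt x + Real.sqrt y) / (Real.sqrt x + Real.sqrt y)^2 := by
        apply div_le_div_of_nonneg_left (by positivity) (by positivity) hAB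
    _ = |Real.sqrt x - Real.sqrt y| / (Real.sqrt x + Real.sqrt y) := by
        rw [sq]
        field_simp

/-- an inequality for finite families of positive reals indexed by
consecutive integers `i ≤ n ≤ j`. -/
theorem stmt9 (i j : ℤ) (hij : i ≤ j) (a b : ℤ → ℝ)
    (ha : ∀ n ∈ Finset.Icc i j, 0 < a n) (hb : ∀ n ∈ Finset.Icc i j, 0 < b n) :
    |(∑ n ∈ Finset.Icc i j, (n : ℝ) * a n) * (∑ n ∈ Finset.Icc i j, b n) -
        (∑ n ∈ Finset.Icc i j, (n : ℝ) * b n) * (∑ n ∈ Finset.Icc i j, a n)| /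
      ((∑ n ∈ Finset.Icc i j, a n) * (∑ n ∈ Finset.Icc i j, b n))
      ≤ ∑ m ∈ Finset.Icc (i + 1) j,
          Real.tanh ((1 / 4) *
            |Real.log ((∑ n ∈ Finset.Icc m j, a n) * (∑ n ∈ Finset.Icc i (m - 1), b n) /
              ((∑ n ∈ Finset.Icc m j, b n) * (∑ n ∈ Finset.Icc i (m - 1), a n)))|) := by
  classical
  set A := ∑ n ∈ Finset.Icc i j, a n with hA
  set B := ∑ n ∈ Finset.Icc i j, b n with hB
  have hne : (Finset.Icc i j).Nonempty := Finset.nonempty_Icc.mpr hij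
  have hApos : 0 < A := Finset.sum_pos ha hne
  have hBpos : 0 < B := Finset.sum_pos hb hne
  have hABpos : 0 < A * B := mul_pos hApos hBpos
  -- rewrite the numerator as a telescoping sum
  have hD : (∑ n ∈ Finset.Icc i j, (n : ℝ) * a n) * B -
      (∑ n ∈ Finset.Icc i j, (n : ℝ) * b n) * A
      = ∑ m ∈ Finset.Icc (i+1) j,
          ((∑ n ∈ Finset.Icc m j, a n) * B - (∑ n ∈ Finset.Icc m j, b n) * A) := by
    rw [sum_identity i j hij a, sum_identity i j hij b, ← hA, ← hB,
      Finset.sum_sub_distrib, ← Finset.sum_mul, ← Finset.sum_mul]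
    ring
  rw [hD]
  calc |∑ m ∈ Finset.Icc (i+1) j,
          ((∑ n ∈ Finset.Icc m j, a n) * B - (∑ n ∈ Finset.Icc m j, b n) * A)| / (A * B)
      ≤ (∑ m ∈ Finset.Icc (i+1) j,
          |(∑ n ∈ Finset.Icc m j, a n) * B - (∑ n ∈ Finset.Icc m j, b n) * A|) / (A * B) := by
        gcongr
        exact Finset.abs_sum_le_sum_abs _ _
    _ = ∑ m ∈ Finset.Icc (i+1) j,
          |(∑ n ∈ Finset.Icc m j, a n) * B - (∑ n ∈ Finset.Icc m j, b n) * A| / (A * B) :=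
        Finset.sum_div _ _ _
    _ ≤ _ := by
        apply Finset.sum_le_sum
        intro m hm
        simp only [Finset.mem_Icc] at hm
        obtain ⟨him, hmj⟩ := hm
        have hsubS : Finset.Icc m j ⊆ Finset.Icc i j := by
          intro n hn; simp only [Finset.mem_Icc] at hn ⊢; omega
        have hsubT : Finset.Icc i (m-1) ⊆ Finset.Icc i j := by
          intro n hn; simp only [Finset.mem_Icc] at hn ⊢; omega
        have hneS : (Finset.Icc m j).Nonempty := Finset.nonempty_Icc.mpr hmj
        have hneT : (Finset.Icc i (m-1)).Nonempty := Finset.nonempty_Icc.mpr (by omega)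
        have hSa : 0 < ∑ n ∈ Finset.Icc m j, a n :=
          Finset.sum_pos (fun n hn => ha n (hsubS hn)) hneS
        have hSb : 0 < ∑ n ∈ Finset.Icc m j, b n :=
          Finset.sum_pos (fun n hn => hb n (hsubS hn)) hneS
        have hTa : 0 < ∑ n ∈ Finset.Icc i (m-1), a n :=
          Finset.sum_pos (fun n hn => ha n (hsubT hn)) hneT
        have hTb : 0 < ∑ n ∈ Finset.Icc i (m-1), b n :=
          Finset.sum_pos (fun n hn => hb n (hsubT hn)) hneT
        have hAsplit : A = ∑ n ∈ Finset.Icc i (m-1), a n + ∑ n ∈ Finset.Icc m j, a n :=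
          icc_split i m j him hmj a
        have hBsplit : B = ∑ n ∈ Finset.Icc i (m-1), b n + ∑ n ∈ Finset.Icc m j, b n :=
          icc_split i m j him hmj b
        rw [hAsplit, hBsplit]
        exact key_bound hSa hSb hTa hTb
end

section
/- Let S be a set of edges of G, let c_max (respectively c_min) be the largest (respectively smallest) cardinality of the intersection of S with the edge set of a spanning tree of G, taken over all spanning trees of G. Then for any two states i, j, |∑_{{m,n}∈S} ∂ ln(π_i/π_j) / ∂B_mn| ≤ (c_max - c_min) tanh(F_{i↔j}/4). -/
open Finset

attribute [local instance] Classical.propDecidable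

section Aux
open SimpleGraph
variable {V : Type*}


lemma aux_chord {ρ σ r : ℝ} (hρ : ρ ≤ 1) (hσ : 1 ≤ σ) (h1 : ρ ≤ r) (h2 : r ≤ σ) :
    (σ - ρ) * max (r - 1) 0 ≤ (σ - 1) * (r - ρ) := by
  rcases le_total r 1 with h | h
  · rw [max_eq_right (by linarith)]; nlinarith
  · rw [max_eq_left (by linarith)]; nlinarith

lemma aux_final {ρ σ u : ℝ} (hρ : ρ ≤ 1) (hσ : 1 ≤ σ) (hu : 1 ≤ u)
    (hσu : σ ≤ ρ * u ^ 2) :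
    (σ - 1) * (1 - ρ) * (u + 1) ≤ (u - 1) * (σ - ρ) := by
  rcases eq_or_lt_of_le (show (1:ℝ) ≤ ρ * u ^ 2 by linarith) with h | h
  · have hσ1 : σ = 1 := le_antisymm (by linarith [h]) hσ
    subst hσ1; nlinarith
  · nlinarith [mul_nonneg (mul_nonneg (sub_nonneg.2 hσ) (add_nonneg (le_trans zero_le_one hu) zero_le_one)) (sq_nonneg (ρ*u - 1)),
      mul_nonneg (sub_nonneg.2 hσu) (mul_nonneg (sub_nonneg.2 hu) (sub_nonneg.2 hρ))]

lemma aux_tv_bound {ι : Type*} (s : Finset ι) (hs : s.Nonempty)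
    (p q c : ι → ℝ) (hp : ∀ T ∈ s, 0 < p T) (hq : ∀ T ∈ s, 0 < q T)
    (hps : ∑ T ∈ s, p T = 1) (hqs : ∑ T ∈ s, q T = 1)
    (u : ℝ) (hu : 1 ≤ u)
    (hr : ∀ T ∈ s, ∀ T' ∈ s, p T * q T' ≤ u ^ 2 * (p T' * q T))
    (lo hi : ℝ) (hc : ∀ T ∈ s, lo ≤ c T ∧ c T ≤ hi) :
    |∑ T ∈ s, c T * p T - ∑ T ∈ s, c T * q T| ≤ (hi - lo) * ((u - 1) / (u + 1)) := by
  have hs' := hs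
  obtain ⟨T₀, hT₀⟩ := hs'
  have hlohi : lo ≤ hi := le_trans (hc T₀ hT₀).1 (hc T₀ hT₀).2
  set r : ι → ℝ := fun T => p T / q T with hrdef
  set ρ : ℝ := s.inf' hs r with hρdef
  set σ : ℝ := s.sup' hs r with hσdef
  have hρ_le : ∀ T ∈ s, ρ ≤ r T := fun T hT => inf'_le r hT
  have h_le_σ : ∀ T ∈ s, r T ≤ σ := fun T hT => le_sup' r hT
  have hρpos : 0 < ρ := by
    obtain ⟨T, hT, hTe⟩ := exists_mem_eq_inf' hs r
    rw [hρdef, hTe]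
    exact div_pos (hp T hT) (hq T hT)
  -- ρ ≤ 1
  have hex_le : ∃ T ∈ s, p T ≤ q T := by
    by_contra hcon
    push_neg at hcon
    have : ∑ T ∈ s, q T < ∑ T ∈ s, p T :=
      Finset.sum_lt_sum_of_nonempty ⟨T₀, hT₀⟩ hcon
    rw [hps, hqs] at this; exact lt_irrefl 1 this
  have hρ1 : ρ ≤ 1 := by
    obtain ⟨T, hT, hTle⟩ := hex_le
    exact le_trans (hρ_le T hT) (div_le_one_of_le₀ hTle (le_of_lt (hq T hT)))
  have hex_ge : ∃ T ∈ s, q T ≤ p T := by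
    by_contra hcon
    push_neg at hcon
    have : ∑ T ∈ s, p T < ∑ T ∈ s, q T :=
      Finset.sum_lt_sum_of_nonempty ⟨T₀, hT₀⟩ hcon
    rw [hps, hqs] at this; exact lt_irrefl 1 this
  have hσ1 : 1 ≤ σ := by
    obtain ⟨T, hT, hTle⟩ := hex_ge
    exact le_trans ((one_le_div (hq T hT)).2 hTle) (h_le_σ T hT)
  -- σ ≤ ρ u²
  have hσρ : σ ≤ ρ * u ^ 2 := by
    obtain ⟨Tσ, hTσ, hTσe⟩ := exists_mem_eq_sup' hs r
    obtain ⟨Tρ, hTρ, hTρe⟩ := exists_mem_eq_inf' hs r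
    rw [hσdef, hρdef, hTσe, hTρe]
    have h := hr Tσ hTσ Tρ hTρ
    have hqρ := hq Tρ hTρ
    have hqσ := hq Tσ hTσ
    rw [div_le_iff₀ hqσ]
    rw [hrdef]
    rw [show p Tρ / q Tρ * u ^ 2 * q Tσ = u ^ 2 * (p Tρ * q Tσ) / q Tρ by
      field_simp]
    rw [le_div_iff₀ hqρ]
    linarith
  set TV : ℝ := ∑ T ∈ s, max (p T - q T) 0 with hTVdef
  -- Step 1
  have hsumeq : ∑ T ∈ s, (p T - q T) = 0 := by
    rw [Finset.sum_sub_distrib, hps, hqs, sub_self]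
  have habs : ∑ T ∈ s, |p T - q T| = 2 * TV := by
    have h1 : ∑ T ∈ s, max (q T - p T) 0 = TV := by
      have : ∑ T ∈ s, (max (p T - q T) 0 - max (q T - p T) 0) = 0 := by
        have : ∀ T, max (p T - q T) 0 - max (q T - p T) 0 = p T - q T := by
          intro T
          rcases le_total (p T) (q T) with h | h
          · rw [max_eq_right (by linarith), max_eq_left (by linarith)]; ring
          · rw [max_eq_left (by linarith), max_eq_right (by linarith)]; ring
        simp_rw [this]; exact hsumeq
      rw [Finset.sum_sub_distrib] at this
      linarith [this]
    have h2 : ∀ T, |p T - q T| = max (p T - q T) 0 + max (q T - p T) 0 := by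
      intro T
      rcases le_total (p T) (q T) with h | h
      · rw [abs_of_nonpos (by linarith), max_eq_right (by linarith),
          max_eq_left (by linarith)]; ring
      · rw [abs_of_nonneg (by linarith), max_eq_left (by linarith),
          max_eq_right (by linarith)]; ring
    simp_rw [h2]
    rw [Finset.sum_add_distrib, h1]
    ring
  have step1 : |∑ T ∈ s, c T * p T - ∑ T ∈ s, c T * q T| ≤ (hi - lo) * TV := by
    have key : ∑ T ∈ s, c T * p T - ∑ T ∈ s, c T * q T
        = ∑ T ∈ s, (c T - (lo + hi) / 2) * (p T - q T) := by
      rw [Finset.sum_congr rfl (fun T _ => by ring :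
        ∀ T ∈ s, (c T - (lo + hi) / 2) * (p T - q T)
          = c T * p T - c T * q T - (lo + hi) / 2 * (p T - q T))]
      rw [Finset.sum_sub_distrib, Finset.sum_sub_distrib, ← Finset.mul_sum, hsumeq]
      ring
    rw [key]
    calc |∑ T ∈ s, (c T - (lo + hi) / 2) * (p T - q T)|
        ≤ ∑ T ∈ s, |(c T - (lo + hi) / 2) * (p T - q T)| := Finset.abs_sum_le_sum_abs _ _
      _ ≤ ∑ T ∈ s, (hi - lo) / 2 * |p T - q T| := by
          apply Finset.sum_le_sum
          intro T hT
          rw [abs_mul]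
          apply mul_le_mul_of_nonneg_right _ (abs_nonneg _)
          rw [abs_le]
          constructor <;> [linarith [(hc T hT).1]; linarith [(hc T hT).2]]
      _ = (hi - lo) / 2 * (2 * TV) := by rw [← Finset.mul_sum, habs]
      _ = (hi - lo) * TV := by ring
  -- Step 2
  have hTVnonneg : 0 ≤ TV := Finset.sum_nonneg fun T _ => le_max_right _ _
  have step2 : TV ≤ (u - 1) / (u + 1) := by
    rcases le_or_gt σ ρ with hle | hlt
    · -- all ratios equal, hence p = q on s
      have hρσ1 : ρ = 1 ∧ σ = 1 := ⟨le_antisymm hρ1 (le_trans hσ1 hle), le_antisymm (le_trans hle hρ1) hσ1⟩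
      have : TV = 0 := by
        apply Finset.sum_eq_zero
        intro T hT
        have h1 : r T ≤ 1 := hρσ1.2 ▸ h_le_σ T hT
        have : p T ≤ q T := by
          rw [hrdef] at h1
          exact (div_le_one (hq T hT)).1 h1
        rw [max_eq_right (by linarith)]
      rw [this]
      apply div_nonneg (by linarith) (by linarith)
    · have hq_r : ∑ T ∈ s, q T * r T = 1 := by
        rw [← hps]
        apply Finset.sum_congr rfl
        intro T hT
        have hqne := (hq T hT).ne'
        rw [hrdef]
        field_simp
      have key : TV * (σ - ρ) ≤ (σ - 1) * (1 - ρ) := by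
        have h1 : ∀ T ∈ s, max (p T - q T) 0 * (σ - ρ) ≤ q T * ((σ - 1) * (r T - ρ)) := by
          intro T hT
          have hpq : p T - q T = q T * (r T - 1) := by
            have hqne := (hq T hT).ne'
            rw [hrdef]; field_simp
          rw [hpq]
          have hmax : max (q T * (r T - 1)) 0 = q T * max (r T - 1) 0 := by
            rcases le_total (r T) 1 with h | h
            · rw [max_eq_right (by nlinarith [hq T hT] : q T * (r T - 1) ≤ 0),
                max_eq_right (by linarith : r T - 1 ≤ 0), mul_zero]
            · rw [max_eq_left (by nlinarith [hq T hT] : (0:ℝ) ≤ q T * (r T - 1)),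
                max_eq_left (by linarith : (0:ℝ) ≤ r T - 1)]
          rw [hmax]
          have hchord := aux_chord hρ1 hσ1 (hρ_le T hT) (h_le_σ T hT)
          calc q T * max (r T - 1) 0 * (σ - ρ)
              = q T * ((σ - ρ) * max (r T - 1) 0) := by ring
            _ ≤ q T * ((σ - 1) * (r T - ρ)) :=
                mul_le_mul_of_nonneg_left hchord (le_of_lt (hq T hT))
        calc TV * (σ - ρ) = ∑ T ∈ s, max (p T - q T) 0 * (σ - ρ) := by
              rw [← Finset.sum_mul]
          _ ≤ ∑ T ∈ s, q T * ((σ - 1) * (r T - ρ)) := Finset.sum_le_sum h1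
          _ = (σ - 1) * (∑ T ∈ s, q T * r T) - (σ - 1) * ρ * (∑ T ∈ s, q T) := by
              rw [Finset.mul_sum, Finset.mul_sum, ← Finset.sum_sub_distrib]
              apply Finset.sum_congr rfl
              intro T _
              ring
          _ = (σ - 1) * (1 - ρ) := by rw [hq_r, hqs]; ring
      have haux := aux_final hρ1 hσ1 hu hσρ
      have hfin : TV * (u + 1) * (σ - ρ) ≤ (u - 1) * (σ - ρ) := by
        calc TV * (u + 1) * (σ - ρ) = TV * (σ - ρ) * (u + 1) := by ring
          _ ≤ (σ - 1) * (1 - ρ) * (u + 1) :=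
              mul_le_mul_of_nonneg_right key (by linarith)
          _ ≤ (u - 1) * (σ - ρ) := haux
      have h2 : TV * (u + 1) ≤ u - 1 :=
        le_of_mul_le_mul_right hfin (by linarith)
      rw [le_div_iff₀ (by linarith : (0:ℝ) < u + 1)]
      exact h2
  calc |∑ T ∈ s, c T * p T - ∑ T ∈ s, c T * q T| ≤ (hi - lo) * TV := step1
    _ ≤ (hi - lo) * ((u - 1) / (u + 1)) := by
        apply mul_le_mul_of_nonneg_left step2 (by linarith)

lemma aux_mean_bound {ι : Type*} (s : Finset ι) (hs : s.Nonempty)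
    (a b c : ι → ℝ) (ha : ∀ T ∈ s, 0 < a T) (hb : ∀ T ∈ s, 0 < b T)
    (u : ℝ) (hu : 1 ≤ u)
    (hr : ∀ T ∈ s, ∀ T' ∈ s, a T * b T' ≤ u ^ 2 * (a T' * b T))
    (lo hi : ℝ) (hc : ∀ T ∈ s, lo ≤ c T ∧ c T ≤ hi) :
    |(∑ T ∈ s, c T * a T) / (∑ T ∈ s, a T) - (∑ T ∈ s, c T * b T) / (∑ T ∈ s, b T)|
      ≤ (hi - lo) * ((u - 1) / (u + 1)) := by
  have hA : 0 < ∑ T ∈ s, a T := Finset.sum_pos ha hs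
  have hB : 0 < ∑ T ∈ s, b T := Finset.sum_pos hb hs
  set A := ∑ T ∈ s, a T
  set B := ∑ T ∈ s, b T
  have key := aux_tv_bound s hs (fun T => a T / A) (fun T => b T / B) c
    (fun T hT => div_pos (ha T hT) hA) (fun T hT => div_pos (hb T hT) hB)
    (by rw [← Finset.sum_div]; exact div_self hA.ne')
    (by rw [← Finset.sum_div]; exact div_self hB.ne')
    u hu
    (fun T hT T' hT' => by
      have h := hr T hT T' hT'
      rw [div_mul_div_comm, div_mul_div_comm,
        show a T * (b T') / (A * B) = a T * b T' / (A * B) by ring,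
        show u ^ 2 * (a T' * b T / (A * B)) = u ^ 2 * (a T' * b T) / (A * B) by ring]
      exact div_le_div_of_nonneg_right h (le_of_lt (mul_pos hA hB)) |>.trans (le_refl _))
    lo hi hc
  have e1 : ∑ T ∈ s, c T * (a T / A) = (∑ T ∈ s, c T * a T) / A := by
    rw [Finset.sum_div]
    exact Finset.sum_congr rfl fun T _ => by ring
  have e2 : ∑ T ∈ s, c T * (b T / B) = (∑ T ∈ s, c T * b T) / B := by
    rw [Finset.sum_div]
    exact Finset.sum_congr rfl fun T _ => by ring
  rw [e1, e2] at key
  exact key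

lemma aux_dist_split {G : SimpleGraph V} {u v c : V} (p : G.Walk u v) (h : c ∈ p.support) :
    G.dist u c + G.dist c v ≤ p.length := by
  have hlen := congr_arg Walk.length (p.take_spec h)
  rw [Walk.length_append] at hlen
  calc G.dist u c + G.dist c v ≤ (p.takeUntil c h).length + (p.dropUntil c h).length :=
        add_le_add (SimpleGraph.dist_le _) (SimpleGraph.dist_le _)
    _ = p.length := hlen

lemma aux_adj_dist {T : SimpleGraph V} (hT : T.IsTree) {a b : V} (hab : T.Adj a b) (r : V) :
    T.dist a r = T.dist b r + 1 ∨ T.dist b r = T.dist a r + 1 := by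
  have hconn := hT.isConnected
  have hab1 : T.dist a b = 1 := dist_eq_one_iff_adj.2 hab
  have hba1 : T.dist b a = 1 := dist_eq_one_iff_adj.2 hab.symm
  have h1 : T.dist a r ≤ T.dist b r + 1 := by
    have := hconn.dist_triangle (u := a) (v := b) (w := r)
    omega
  have h2 : T.dist b r ≤ T.dist a r + 1 := by
    have := hconn.dist_triangle (u := b) (v := a) (w := r)
    omega
  have hne : T.dist a r ≠ T.dist b r := by
    intro heq
    obtain ⟨Pa, hPa, hPalen⟩ := hconn.exists_path_of_dist a r
    obtain ⟨Pb, hPb, hPblen⟩ := hconn.exists_path_of_dist b r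
    have hanotin : a ∉ Pb.support := by
      intro hin
      have hs := aux_dist_split Pb hin
      rw [hPblen] at hs
      omega
    have hcons : (Walk.cons hab Pb).IsPath := hPb.cons hanotin
    have huniq := hT.existsUnique_path a r
    have heqp := huniq.unique hPa hcons
    have hlen := congr_arg Walk.length heqp
    rw [Walk.length_cons, hPalen, hPblen] at hlen
    omega
  omega

lemma aux_parent_transfer {T : SimpleGraph V} (hT : T.IsTree) {x y a b : V}
    (hxy : T.Adj x y) (hab : T.Adj a b) (hne : s(a, b) ≠ s(x, y))
    (h : T.dist a x = T.dist b x + 1) : T.dist a y = T.dist b y + 1 := by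
  have hconn := hT.isConnected
  rcases aux_adj_dist hT hab y with hgood | hbad
  · exact hgood
  exfalso
  set m := T.dist a y with hm
  have hby : T.dist b y = m + 1 := hbad
  set d := T.dist b x with hd
  have hax : T.dist a x = d + 1 := h
  -- relations between dist to x and dist to y
  have hra : T.dist x a = T.dist y a + 1 ∨ T.dist y a = T.dist x a + 1 := aux_adj_dist hT hxy a
  have hrb : T.dist x b = T.dist y b + 1 ∨ T.dist y b = T.dist x b + 1 := aux_adj_dist hT hxy b
  rw [SimpleGraph.dist_comm (u := x), SimpleGraph.dist_comm (u := y)] at hra hrb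
  have hmd : m = d := by omega
  have hab1 : T.dist a b = 1 := dist_eq_one_iff_adj.2 hab
  have hxy1 : T.dist x y = 1 := dist_eq_one_iff_adj.2 hxy
  by_cases hm0 : m = 0
  · have ha : a = y := hconn.dist_eq_zero_iff.1 (by omega)
    have hb : b = x := hconn.dist_eq_zero_iff.1 (by omega)
    subst ha; subst hb
    exact hne (Sym2.eq_swap)
  · obtain ⟨Py, hPy, hPylen⟩ := hconn.exists_path_of_dist a y
    obtain ⟨Pb, hPb, hPblen⟩ := hconn.exists_path_of_dist b x
    have hxnot : x ∉ Py.support := by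
      intro hin
      have hs := aux_dist_split Py hin
      rw [hPylen] at hs
      rw [SimpleGraph.dist_comm (u := x)] at hxy1
      omega
    have hP1path : (Py.concat hxy.symm).IsPath := by
      rw [← Walk.isPath_reverse_iff, Walk.reverse_concat]
      refine hPy.reverse.cons ?_
      rw [Walk.support_reverse, List.mem_reverse]
      exact hxnot
    have hanot : a ∉ Pb.support := by
      intro hin
      have hs := aux_dist_split Pb hin
      rw [hPblen] at hs
      have hba1 : T.dist b a = 1 := by rw [SimpleGraph.dist_comm]; exact hab1
      omega
    have hP2path : (Walk.cons hab Pb).IsPath := hPb.cons hanot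
    have heqp := (hT.existsUnique_path a x).unique hP1path hP2path
    have hbmem : b ∈ (Py.concat hxy.symm).support := by
      rw [heqp, Walk.support_cons]
      exact List.mem_cons_of_mem _ Pb.start_mem_support
    rw [Walk.support_concat, List.mem_append] at hbmem
    rcases hbmem with hbmem | hbx
    · have hs := aux_dist_split Py hbmem
      rw [hPylen] at hs
      omega
    · simp only [List.mem_singleton] at hbx
      have hd0 : T.dist b x = 0 := by rw [hbx, SimpleGraph.dist_self]
      omega

lemma aux_reroot_adj [Fintype V] {T : SimpleGraph V} (hT : T.IsTree) {x y : V}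
    (hxy : T.Adj x y) (W : V → V → ℝ) :
    treeWeight W T x * W y x = treeWeight W T y * W x y := by
  classical
  set Ex := Finset.univ.filter
      (fun p : V × V => T.Adj p.1 p.2 ∧ T.dist p.2 x + 1 = T.dist p.1 x) with hEx
  set Ey := Finset.univ.filter
      (fun p : V × V => T.Adj p.1 p.2 ∧ T.dist p.2 y + 1 = T.dist p.1 y) with hEy
  have hmemxy : (x, y) ∈ Ey := by
    rw [hEy, Finset.mem_filter]
    refine ⟨Finset.mem_univ _, hxy, ?_⟩
    rw [SimpleGraph.dist_self, dist_eq_one_iff_adj.2 hxy]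
  have hyxnotEy : (y, x) ∉ Ey := by
    rw [hEy, Finset.mem_filter]
    rintro ⟨-, -, hd⟩
    rw [SimpleGraph.dist_self] at hd
    omega
  have hESet : Ex = insert (y, x) (Ey.erase (x, y)) := by
    ext p
    obtain ⟨a, b⟩ := p
    simp only [hEx, hEy, Finset.mem_insert, Finset.mem_erase, Finset.mem_filter,
      Finset.mem_univ, true_and, Prod.mk.injEq, ne_eq]
    constructor
    · rintro ⟨hadj, hd⟩
      by_cases hcase : s(a, b) = s(x, y)
      · rw [Sym2.eq_iff] at hcase
        rcases hcase with ⟨rfl, rfl⟩ | ⟨rfl, rfl⟩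
        · exfalso
          rw [SimpleGraph.dist_self] at hd
          omega
        · exact Or.inl ⟨rfl, rfl⟩
      · refine Or.inr ⟨?_, hadj, aux_parent_transfer hT hxy hadj hcase hd.symm |>.symm⟩
        rintro ⟨rfl, rfl⟩
        exact hcase rfl
    · rintro (⟨rfl, rfl⟩ | ⟨hnepair, hadj, hd⟩)
      · refine ⟨hxy.symm, ?_⟩
        rw [SimpleGraph.dist_self, dist_eq_one_iff_adj.2 hxy.symm]
      · refine ⟨hadj, ?_⟩
        have hcase : s(a, b) ≠ s(y, x) := by
          intro hcon
          rw [Sym2.eq_iff] at hcon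
          rcases hcon with ⟨rfl, rfl⟩ | ⟨rfl, rfl⟩
          · rw [SimpleGraph.dist_self] at hd
            omega
          · exact hnepair ⟨rfl, rfl⟩
        exact (aux_parent_transfer hT hxy.symm hadj hcase hd.symm).symm
  have hyxnot : (y, x) ∉ Ey.erase (x, y) := fun hmem => hyxnotEy (Finset.mem_of_mem_erase hmem)
  have e1 : treeWeight W T x = W x y * ∏ p ∈ Ey.erase (x, y), W p.2 p.1 := by
    rw [treeWeight, ← hEx, hESet, Finset.prod_insert hyxnot]
  have e2 : treeWeight W T y = W y x * ∏ p ∈ Ey.erase (x, y), W p.2 p.1 := by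
    rw [treeWeight, ← hEy, ← Finset.mul_prod_erase Ey _ hmemxy]
  rw [e1, e2]
  ring

lemma walkWeight_nil {W : V → V → ℝ} {G : SimpleGraph V} {u : V} :
    walkWeight W (Walk.nil : G.Walk u u) = 1 := by simp [walkWeight]

lemma walkWeight_cons {W : V → V → ℝ} {G : SimpleGraph V} {u v w : V}
    (h : G.Adj u v) (p : G.Walk v w) :
    walkWeight W (Walk.cons h p) = W v u * walkWeight W p := by
  simp [walkWeight, Walk.darts_cons]

lemma walkWeight_append {W : V → V → ℝ} {G : SimpleGraph V} {u v w : V}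
    (p : G.Walk u v) (q : G.Walk v w) :
    walkWeight W (p.append q) = walkWeight W p * walkWeight W q := by
  simp [walkWeight, Walk.darts_append]

lemma aux_reroot_walk [Fintype V] {T : SimpleGraph V} (hT : T.IsTree) (W : V → V → ℝ)
    {i j : V} (Q : T.Walk j i) :
    treeWeight W T i * walkWeight W Q.reverse = treeWeight W T j * walkWeight W Q := by
  induction Q with
  | nil => simp [walkWeight_nil]
  | @cons u v w h q ih =>
    rw [Walk.reverse_cons, walkWeight_append, walkWeight_cons, walkWeight_cons, walkWeight_nil]
    have hadj := aux_reroot_adj hT h W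
    linear_combination (W u v) * ih - (walkWeight W q) * hadj

lemma aux_prod_edges [Fintype V] {T : SimpleGraph V} (hT : T.IsTree) (k : V) (g : Sym2 V → ℝ) :
    ∏ p ∈ Finset.univ.filter
        (fun p : V × V => T.Adj p.1 p.2 ∧ T.dist p.2 k + 1 = T.dist p.1 k),
      g s(p.1, p.2) = ∏ e ∈ T.edgeFinset, g e := by
  classical
  apply Finset.prod_bij (fun p _ => s(p.1, p.2))
  · intro p hp
    rw [SimpleGraph.mem_edgeFinset, SimpleGraph.mem_edgeSet]
    exact (Finset.mem_filter.1 hp).2.1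
  · rintro ⟨a, b⟩ hp ⟨a', b'⟩ hp' heq
    rw [Finset.mem_filter] at hp hp'
    obtain ⟨-, hadj, hd⟩ := hp
    obtain ⟨-, hadj', hd'⟩ := hp'
    rw [Sym2.eq_iff] at heq
    simp only at hadj hd hadj' hd' heq ⊢
    rcases heq with ⟨h1, h2⟩ | ⟨h1, h2⟩
    · rw [h1, h2]
    · exfalso
      subst h1; subst h2
      omega
  · intro e he
    rw [SimpleGraph.mem_edgeFinset] at he
    induction e with
    | _ a b =>
      rw [SimpleGraph.mem_edgeSet] at he
      rcases aux_adj_dist hT he k with hd | hd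
      · exact ⟨(a, b), Finset.mem_filter.2 ⟨Finset.mem_univ _, he, hd.symm⟩, rfl⟩
      · exact ⟨(b, a), Finset.mem_filter.2 ⟨Finset.mem_univ _, he.symm, hd.symm⟩, Sym2.eq_swap⟩
  · intro p hp
    rfl

lemma walkWeight_mapLe {W : V → V → ℝ} {G G' : SimpleGraph V} (h : G ≤ G') {u v : V}
    (p : G.Walk u v) : walkWeight W (p.mapLe h) = walkWeight W p := by
  simp only [walkWeight, Walk.mapLe, Walk.darts_map, List.map_map]
  rfl

lemma mapLe_reverse {G G' : SimpleGraph V} (h : G ≤ G') {u v : V} (p : G.Walk u v) :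
    (p.mapLe h).reverse = p.reverse.mapLe h := by
  simp only [Walk.mapLe, Walk.reverse_map]

lemma walkWeight_pos {W : V → V → ℝ} {G : SimpleGraph V}
    (hW : ∀ a b, G.Adj a b → 0 < W a b) {u v : V} (p : G.Walk u v) :
    0 < walkWeight W p := by
  induction p with
  | nil => rw [walkWeight_nil]; exact one_pos
  | @cons u' v' w' h q ih =>
    rw [walkWeight_cons]
    exact mul_pos (hW _ _ h.symm) ih

lemma treeWeight_pos [Fintype V] {W : V → V → ℝ} {T : SimpleGraph V}
    (hW : ∀ a b, T.Adj a b → 0 < W a b) (r : V) : 0 < treeWeight W T r := by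
  apply Finset.prod_pos
  rintro ⟨a, b⟩ hp
  obtain ⟨-, hadj, -⟩ := Finset.mem_filter.1 hp
  exact hW b a (SimpleGraph.adj_symm _ hadj)

lemma Fbtw_bddAbove [Fintype V] [DecidableEq V] (W : V → V → ℝ) (G : SimpleGraph V) (i j : V) :
    BddAbove {x : ℝ | ∃ (p : G.Walk i j) (q : G.Walk j i), p.IsPath ∧ q.IsPath ∧
      x = |Real.log (walkWeight W p * walkWeight W q /
            (walkWeight W p.reverse * walkWeight W q.reverse))|} := by
  apply Set.Finite.bddAbove
  apply Set.Finite.subset (Set.finite_range (fun pq : G.Path i j × G.Path j i =>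
    |Real.log (walkWeight W pq.1.1 * walkWeight W pq.2.1 /
      (walkWeight W pq.1.1.reverse * walkWeight W pq.2.1.reverse))|))
  rintro x ⟨p, q, hp, hq, rfl⟩
  exact ⟨(⟨p, hp⟩, ⟨q, hq⟩), rfl⟩

lemma Fbtw_nonneg [Fintype V] [DecidableEq V] {G : SimpleGraph V} (hG : G.Connected)
    (W : V → V → ℝ) (i j : V) : 0 ≤ Fbtw W G i j := by
  obtain ⟨p, hp, -⟩ := hG.exists_path_of_dist i j
  obtain ⟨q, hq, -⟩ := hG.exists_path_of_dist j i
  have hmem : |Real.log (walkWeight W p * walkWeight W q /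
      (walkWeight W p.reverse * walkWeight W q.reverse))| ∈
      {x : ℝ | ∃ (p : G.Walk i j) (q : G.Walk j i), p.IsPath ∧ q.IsPath ∧
        x = |Real.log (walkWeight W p * walkWeight W q /
              (walkWeight W p.reverse * walkWeight W q.reverse))|} :=
    ⟨p, q, hp, hq, rfl⟩
  exact le_trans (abs_nonneg _) (le_csSup (Fbtw_bddAbove W G i j) hmem)

lemma aux_ratio_bound [Fintype V] [DecidableEq V] {G : SimpleGraph V}
    (W : V → V → ℝ) (hW : ∀ a b, G.Adj a b → 0 < W a b)
    {T T' : SimpleGraph V} (hT : IsSpanningTree G T) (hT' : IsSpanningTree G T') (i j : V) :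
    treeWeight W T i * treeWeight W T' j ≤
      Real.exp (Fbtw W G i j) * (treeWeight W T' i * treeWeight W T j) := by
  have hWT : ∀ a b, T.Adj a b → 0 < W a b := fun a b h => hW a b (hT.1 h)
  have hWT' : ∀ a b, T'.Adj a b → 0 < W a b := fun a b h => hW a b (hT'.1 h)
  obtain ⟨Q, hQ⟩ := (hT.2.existsUnique_path j i).exists
  obtain ⟨P, hP⟩ := (hT'.2.existsUnique_path i j).exists
  have rQ := aux_reroot_walk hT.2 W Q
  have rP := aux_reroot_walk hT'.2 W P
  set A := treeWeight W T i with hA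
  set B := treeWeight W T j with hB
  set C := treeWeight W T' i with hC
  set D := treeWeight W T' j with hD
  have hApos : 0 < A := treeWeight_pos hWT i
  have hBpos : 0 < B := treeWeight_pos hWT j
  have hCpos : 0 < C := treeWeight_pos hWT' i
  have hDpos : 0 < D := treeWeight_pos hWT' j
  have hwP : 0 < walkWeight W P := walkWeight_pos hWT' P
  have hwQ : 0 < walkWeight W Q := walkWeight_pos hWT Q
  have hwPr : 0 < walkWeight W P.reverse := walkWeight_pos hWT' P.reverse
  have hwQr : 0 < walkWeight W Q.reverse := walkWeight_pos hWT Q.reverse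
  have hmul : (A * walkWeight W Q.reverse) * (D * walkWeight W P.reverse)
      = (B * walkWeight W Q) * (C * walkWeight W P) := by rw [rQ, rP]
  set ρ : ℝ := walkWeight W P * walkWeight W Q /
      (walkWeight W P.reverse * walkWeight W Q.reverse) with hρ
  have hρpos : 0 < ρ := div_pos (mul_pos hwP hwQ) (mul_pos hwPr hwQr)
  have hAD : A * D = (C * B) * ρ := by
    rw [hρ]
    field_simp
    linear_combination hmul
  -- the element of the Fbtw set
  set p : G.Walk i j := P.mapLe hT'.1 with hpdef
  set q : G.Walk j i := Q.mapLe hT.1 with hqdef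
  have hρeq : ρ = walkWeight W p * walkWeight W q /
      (walkWeight W p.reverse * walkWeight W q.reverse) := by
    rw [hρ, hpdef, hqdef, mapLe_reverse, mapLe_reverse, walkWeight_mapLe, walkWeight_mapLe,
      walkWeight_mapLe, walkWeight_mapLe]
  have hmem : |Real.log ρ| ∈
      {x : ℝ | ∃ (p : G.Walk i j) (q : G.Walk j i), p.IsPath ∧ q.IsPath ∧
        x = |Real.log (walkWeight W p * walkWeight W q /
              (walkWeight W p.reverse * walkWeight W q.reverse))|} :=
    ⟨p, q, hP.mapLe _, hQ.mapLe _, by rw [hρeq]⟩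
  have hle : Real.log ρ ≤ Fbtw W G i j :=
    le_trans (le_abs_self _) (le_csSup (Fbtw_bddAbove W G i j) hmem)
  have hρle : ρ ≤ Real.exp (Fbtw W G i j) := by
    rw [← Real.exp_log hρpos]
    exact Real.exp_le_exp.2 hle
  calc A * D = (C * B) * ρ := hAD
    _ ≤ (C * B) * Real.exp (Fbtw W G i j) :=
        mul_le_mul_of_nonneg_left hρle (le_of_lt (mul_pos hCpos hBpos))
    _ = Real.exp (Fbtw W G i j) * (C * B) := by ring

end Aux


section PartC
open SimpleGraph
variable {V : Type*}

lemma aux_tanh (x : ℝ) :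
    Real.tanh x = (Real.exp (2 * x) - 1) / (Real.exp (2 * x) + 1) := by
  rw [Real.tanh_eq_sinh_div_cosh, Real.sinh_eq, Real.cosh_eq, show (2:ℝ) * x = x + x by ring,
    Real.exp_add, Real.exp_neg]
  have h1 : Real.exp x ≠ 0 := (Real.exp_pos x).ne'
  have h2 : Real.exp x + (Real.exp x)⁻¹ ≠ 0 := by positivity
  have h3 : Real.exp x * Real.exp x + 1 ≠ 0 := by positivity
  field_simp

lemma rates_pos {G : SimpleGraph V} (Bp : V → V → ℝ) (Ep : V → ℝ) (Fp : V → V → ℝ)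
    {a b : V} (h : G.Adj a b) : 0 < rates G Bp Ep Fp a b := by
  rw [rates, if_pos h]
  exact Real.exp_pos _

lemma rates_updBadd {G : SimpleGraph V} (Bp : V → V → ℝ) (Ep : V → ℝ) (Fp : V → V → ℝ)
    (S : Set (Sym2 V)) (t : ℝ) {a b : V} (h : G.Adj a b) :
    rates G (updBadd Bp S t) Ep Fp a b
      = (if s(a, b) ∈ S then Real.exp (-t) else 1) * rates G Bp Ep Fp a b := by
  simp only [rates, updBadd, if_pos h]
  by_cases hm : s(a, b) ∈ S
  · rw [if_pos hm, if_pos hm, ← Real.exp_add]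
    congr 1
    ring
  · rw [if_neg hm, if_neg hm, one_mul]

lemma treeWeight_updBadd [Fintype V] [DecidableEq V] {G T : SimpleGraph V}
    (hT : IsSpanningTree G T) (Bp : V → V → ℝ) (Ep : V → ℝ) (Fp : V → V → ℝ)
    (S : Set (Sym2 V)) (t : ℝ) (k : V) :
    treeWeight (rates G (updBadd Bp S t) Ep Fp) T k
      = Real.exp (-(((S ∩ T.edgeSet).ncard : ℝ) * t)) * treeWeight (rates G Bp Ep Fp) T k := by
  classical
  rw [treeWeight, treeWeight]
  have hsplit : ∀ p ∈ Finset.univ.filter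
      (fun p : V × V => T.Adj p.1 p.2 ∧ T.dist p.2 k + 1 = T.dist p.1 k),
      rates G (updBadd Bp S t) Ep Fp p.2 p.1
        = (if s(p.1, p.2) ∈ S then Real.exp (-t) else 1) * rates G Bp Ep Fp p.2 p.1 := by
    rintro ⟨a, b⟩ hp
    obtain ⟨-, hadj, -⟩ := Finset.mem_filter.1 hp
    have hGadj : G.Adj b a := hT.1 hadj.symm
    rw [rates_updBadd Bp Ep Fp S t hGadj]
    have : s(b, a) = s(a, b) := Sym2.eq_swap
    rw [this]
  rw [Finset.prod_congr rfl hsplit, Finset.prod_mul_distrib]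
  congr 1
  rw [aux_prod_edges hT.2 k (fun e => if e ∈ S then Real.exp (-t) else 1),
    ← Finset.prod_filter, Finset.prod_const]
  have hcard : (T.edgeFinset.filter (fun e => e ∈ S)).card = (S ∩ T.edgeSet).ncard := by
    have hset : S ∩ T.edgeSet = ↑(T.edgeFinset.filter (fun e => e ∈ S)) := by
      ext e
      simp only [Set.mem_inter_iff, Finset.coe_filter, SimpleGraph.mem_edgeFinset,
        Set.mem_setOf_eq]
      tauto
    rw [hset, Set.ncard_coe_finset]
  rw [hcard, ← Real.exp_nat_mul]
  congr 1
  push_cast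
  ring

lemma sumTrees_updBadd [Fintype V] [DecidableEq V] {G : SimpleGraph V}
    (Bp : V → V → ℝ) (Ep : V → ℝ) (Fp : V → V → ℝ) (S : Set (Sym2 V)) (t : ℝ) (k : V) :
    sumTrees (rates G (updBadd Bp S t) Ep Fp) G k
      = ∑ T ∈ Finset.univ.filter (fun T : SimpleGraph V => IsSpanningTree G T),
          Real.exp (-(((S ∩ T.edgeSet).ncard : ℝ) * t)) * treeWeight (rates G Bp Ep Fp) T k := by
  rw [sumTrees]
  exact Finset.sum_congr rfl fun T hT =>
    treeWeight_updBadd (Finset.mem_filter.1 hT).2 Bp Ep Fp S t k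

end PartC

/-- multi-edge bound. The response of `ln(π_i/π_j)` to the
simultaneous perturbation of the symmetric edge parameters of the edges in
`S` (i.e. the sum of the single-edge responses) is bounded by
`(c_max - c_min) tanh(F_{i↔j}/4)`. -/
theorem stmt10 {V : Type*} [Fintype V] [DecidableEq V]
    (G : SimpleGraph V) (hG : G.Connected)
    (Bp : V → V → ℝ) (Ep : V → ℝ) (Fp : V → V → ℝ)
    (hB : ∀ i j, Bp i j = Bp j i) (hF : ∀ i j, Fp i j = -Fp j i)
    (S : Set (Sym2 V)) (hS : S ⊆ G.edgeSet)
    (cmax cmin : ℕ)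
    (hcmax : IsGreatest {c : ℕ | ∃ T : SimpleGraph V,
      IsSpanningTree G T ∧ (S ∩ T.edgeSet).ncard = c} cmax)
    (hcmin : IsLeast {c : ℕ | ∃ T : SimpleGraph V,
      IsSpanningTree G T ∧ (S ∩ T.edgeSet).ncard = c} cmin)
    (i j : V) :
    |deriv (fun t =>
        Real.log (piP G (updBadd Bp S t) Ep Fp i /
                  piP G (updBadd Bp S t) Ep Fp j)) 0|
      ≤ ((cmax : ℝ) - (cmin : ℝ)) *
          Real.tanh (Fbtw (rates G Bp Ep Fp) G i j / 4) := by
  classical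
  set W0 := rates G Bp Ep Fp with hW0
  set 𝒯 := Finset.univ.filter (fun T : SimpleGraph V => IsSpanningTree G T) with h𝒯
  obtain ⟨T₀, hT₀span, -⟩ := hcmax.1
  have hT₀ : T₀ ∈ 𝒯 := Finset.mem_filter.2 ⟨Finset.mem_univ _, hT₀span⟩
  have h𝒯ne : 𝒯.Nonempty := ⟨T₀, hT₀⟩
  set cf : SimpleGraph V → ℝ := fun T => ((S ∩ T.edgeSet).ncard : ℝ) with hcf
  set a : SimpleGraph V → V → ℝ := fun T k => treeWeight W0 T k with ha
  set A : V → ℝ → ℝ := fun k t => ∑ T ∈ 𝒯, Real.exp (-(cf T * t)) * a T k with hAdef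
  have hW0pos : ∀ x y, G.Adj x y → 0 < W0 x y := fun x y h => rates_pos Bp Ep Fp h
  have hapos : ∀ T ∈ 𝒯, ∀ k, 0 < a T k := by
    intro T hT k
    have hTs := (Finset.mem_filter.1 hT).2
    exact treeWeight_pos (fun x y h => hW0pos x y (hTs.1 h)) k
  have hApos : ∀ k t, 0 < A k t :=
    fun k t => Finset.sum_pos (fun T hT => mul_pos (Real.exp_pos _) (hapos T hT k)) h𝒯ne
  have hsum : ∀ t k, sumTrees (rates G (updBadd Bp S t) Ep Fp) G k = A k t := by
    intro t k
    rw [sumTrees_updBadd, hAdef]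
  have hVne : Nonempty V := hG.nonempty
  have hZpos : ∀ t, 0 < ∑ l : V, sumTrees (rates G (updBadd Bp S t) Ep Fp) G l := by
    intro t
    rw [Finset.sum_congr rfl (fun l _ => hsum t l)]
    exact Finset.sum_pos (fun l _ => hApos l t) Finset.univ_nonempty
  have hdiv : ∀ (x y z : ℝ), z ≠ 0 → y ≠ 0 → (x / z) / (y / z) = x / y := by
    intro x y z hz hy
    field_simp
  have hlog : (fun t => Real.log (piP G (updBadd Bp S t) Ep Fp i /
      piP G (updBadd Bp S t) Ep Fp j))
      = fun t => Real.log (A i t) - Real.log (A j t) := by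
    funext t
    rw [piP, piP, mttPi, mttPi, hsum, hsum,
      hdiv (A i t) (A j t) _ (hZpos t).ne' (hApos j t).ne',
      Real.log_div (hApos i t).ne' (hApos j t).ne']
  rw [hlog]
  have hHD : ∀ k, HasDerivAt (fun t => A k t) (∑ T ∈ 𝒯, -(cf T) * a T k) 0 := by
    intro k
    have : ∀ T ∈ 𝒯, HasDerivAt (fun t => Real.exp (-(cf T * t)) * a T k)
        (-(cf T) * a T k) 0 := by
      intro T hT
      have h1 : HasDerivAt (fun t : ℝ => -(cf T * t)) (-(cf T)) 0 := by
        simpa using ((hasDerivAt_id (0:ℝ)).const_mul (cf T)).fun_neg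
      have h2 := h1.exp
      have h3 := h2.mul_const (a T k)
      simpa using h3
    simpa [hAdef] using HasDerivAt.fun_sum this
  have hf : HasDerivAt (fun t => Real.log (A i t) - Real.log (A j t))
      ((∑ T ∈ 𝒯, -(cf T) * a T i) / A i 0 - (∑ T ∈ 𝒯, -(cf T) * a T j) / A j 0) 0 :=
    ((hHD i).log (hApos i 0).ne').sub ((hHD j).log (hApos j 0).ne')
  rw [hf.deriv]
  have hA0 : ∀ k, A k 0 = ∑ T ∈ 𝒯, a T k := by
    intro k
    rw [hAdef]
    simp
  have hneg : ∀ k, ∑ T ∈ 𝒯, -(cf T) * a T k = -∑ T ∈ 𝒯, cf T * a T k := by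
    intro k
    rw [← Finset.sum_neg_distrib]
    exact Finset.sum_congr rfl fun T _ => by ring
  rw [hA0, hA0, hneg, hneg]
  rw [show -(∑ T ∈ 𝒯, cf T * a T i) / (∑ T ∈ 𝒯, a T i) -
        -(∑ T ∈ 𝒯, cf T * a T j) / (∑ T ∈ 𝒯, a T j)
      = -((∑ T ∈ 𝒯, cf T * a T i) / (∑ T ∈ 𝒯, a T i) -
          (∑ T ∈ 𝒯, cf T * a T j) / (∑ T ∈ 𝒯, a T j)) by ring, abs_neg]
  set Fb := Fbtw W0 G i j with hFb
  have hFbnonneg : 0 ≤ Fb := Fbtw_nonneg hG W0 i j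
  set u := Real.exp (Fb / 2) with hu
  have hu1 : 1 ≤ u := Real.one_le_exp (by positivity)
  have husq : u ^ 2 = Real.exp Fb := by
    rw [hu, sq, ← Real.exp_add, add_halves]
  have htanh : Real.tanh (Fb / 4) = (u - 1) / (u + 1) := by
    rw [aux_tanh, show (2:ℝ) * (Fb / 4) = Fb / 2 by ring, ← hu]
  rw [htanh]
  apply aux_mean_bound 𝒯 h𝒯ne (fun T => a T i) (fun T => a T j) cf
    (fun T hT => hapos T hT i) (fun T hT => hapos T hT j) u hu1
  · intro T hT T' hT'
    rw [husq]
    exact aux_ratio_bound W0 hW0pos (Finset.mem_filter.1 hT).2 (Finset.mem_filter.1 hT').2 i j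
  · intro T hT
    have hTs := (Finset.mem_filter.1 hT).2
    have hmem : (S ∩ T.edgeSet).ncard ∈ {c : ℕ | ∃ T : SimpleGraph V,
        IsSpanningTree G T ∧ (S ∩ T.edgeSet).ncard = c} := ⟨T, hTs, rfl⟩
    constructor
    · exact_mod_cast Nat.cast_le.2 (hcmin.2 hmem)
    · exact_mod_cast Nat.cast_le.2 (hcmax.2 hmem)
end
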